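/- arXiv:1804.03452 — 8 statements merged into one kernel-verified Lean document; each statement's English description precedes it below -/
import Mathlib

section
/- Let Lx, Ly and m be positive integers with 2m < Lx and 2m < Ly. Then the number of unordered pairs {a, b} of distinct sites of the Lx × Ly lattice whose periodic uniform distance equals m is exactly 4·m·Lx·Ly. -/
/-- The site set of the `Lx × Ly` square lattice. -/
def latticeSites (Lx Ly : ℕ) : Finset (ℕ × ℕ) :=
  Finset.range Lx ×ˢ Finset.range Ly

/-- The uniform (Chebyshev) distance under periodic boundary conditions on an
`Lx × Ly` lattice. -/
def periodicUniformDist (Lx Ly : ℕ) (a b : ℕ × ℕ) : ℕ :=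
  max (min (Nat.dist a.1 b.1) (Lx - Nat.dist a.1 b.1))
    (min (Nat.dist a.2 b.2) (Ly - Nat.dist a.2 b.2))


lemma modL (L x : ℕ) (hL : 0 < L) (hx : x < 3*L) :
    (x % L = x ∧ x < L) ∨ (x % L = x - L ∧ L ≤ x ∧ x < 2*L) ∨ (x % L = x - 2*L ∧ 2*L ≤ x) := by
  rcases Nat.lt_or_ge x L with h | h
  · exact Or.inl ⟨Nat.mod_eq_of_lt h, h⟩
  rcases Nat.lt_or_ge x (2*L) with h2 | h2
  · refine Or.inr (Or.inl ⟨?_, h, h2⟩)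
    rw [Nat.mod_eq_sub_mod h, Nat.mod_eq_of_lt (by omega)]
  · refine Or.inr (Or.inr ⟨?_, h2⟩)
    rw [Nat.mod_eq_sub_mod h, Nat.mod_eq_sub_mod (by omega), Nat.mod_eq_of_lt (by omega)]
    omega

lemma lineCount (L a k : ℕ) (ha : a < L) (hk : 2*k < L) :
    ((Finset.range L).filter (fun b => min (Nat.dist a b) (L - Nat.dist a b) ≤ k)).card
    = 2*k+1 := by
  have hL : 0 < L := by omega
  have hset : (Finset.range L).filter (fun b => min (Nat.dist a b) (L - Nat.dist a b) ≤ k)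
      = (Finset.range (2*k+1)).image (fun t => (a + (L - k) + t) % L) := by
    ext b
    simp only [Finset.mem_filter, Finset.mem_image, Finset.mem_range]
    constructor
    · rintro ⟨hb, hmin⟩
      simp only [Nat.dist] at hmin
      rcases min_le_iff.mp hmin with h1 | h1
      · refine ⟨k + b - a, by omega, ?_⟩
        have : a + (L - k) + (k + b - a) = L + b := by omega
        rw [this, Nat.add_mod_left, Nat.mod_eq_of_lt hb]
      · rcases Nat.lt_or_ge b a with hba | hba
        · refine ⟨k + L + b - a, by omega, ?_⟩
          have : a + (L - k) + (k + L + b - a) = L + (L + b) := by omega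
          rw [this, Nat.add_mod_left, Nat.add_mod_left, Nat.mod_eq_of_lt hb]
        · refine ⟨k + b - a - L, by omega, ?_⟩
          have : a + (L - k) + (k + b - a - L) = b := by omega
          rw [this, Nat.mod_eq_of_lt hb]
    · rintro ⟨t, ht, rfl⟩
      refine ⟨Nat.mod_lt _ hL, ?_⟩
      rcases modL L (a + (L - k) + t) hL (by omega) with ⟨he, h⟩ | ⟨he, h, h'⟩ | ⟨he, h⟩ <;>
        rw [he] <;> simp only [Nat.dist] <;> omega
  rw [hset, Finset.card_image_of_injOn, Finset.card_range]
  intro t1 h1 t2 h2 hf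
  simp only [Finset.coe_range, Set.mem_Iio] at h1 h2
  have := Nat.ModEq.add_left_cancel' (a + (L - k)) (hf : _ ≡ _ [MOD L])
  rwa [Nat.ModEq, Nat.mod_eq_of_lt (by omega), Nat.mod_eq_of_lt (by omega)] at this

lemma ball_card (Lx Ly a1 a2 k : ℕ) (h1 : a1 < Lx) (h2 : a2 < Ly)
    (hk1 : 2*k < Lx) (hk2 : 2*k < Ly) :
    ((latticeSites Lx Ly).filter
      (fun b => periodicUniformDist Lx Ly (a1, a2) b ≤ k)).card = (2*k+1)*(2*k+1) := by
  have hset : (latticeSites Lx Ly).filter (fun b => periodicUniformDist Lx Ly (a1, a2) b ≤ k)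
      = ((Finset.range Lx).filter (fun b => min (Nat.dist a1 b) (Lx - Nat.dist a1 b) ≤ k))
        ×ˢ ((Finset.range Ly).filter (fun b => min (Nat.dist a2 b) (Ly - Nat.dist a2 b) ≤ k)) := by
    ext p
    simp only [latticeSites, periodicUniformDist, Finset.mem_filter, Finset.mem_product,
      Finset.mem_range, max_le_iff]
    tauto
  rw [hset, Finset.card_product, lineCount Lx a1 k h1 hk1, lineCount Ly a2 k h2 hk2]

lemma sphere_card (Lx Ly m : ℕ) (a : ℕ × ℕ) (ha : a ∈ latticeSites Lx Ly) (hm : 0 < m)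
    (hmx : 2*m < Lx) (hmy : 2*m < Ly) :
    ((latticeSites Lx Ly).filter
      (fun b => periodicUniformDist Lx Ly a b = m)).card = 8*m := by
  obtain ⟨a1, a2⟩ := a
  rw [latticeSites, Finset.mem_product, Finset.mem_range, Finset.mem_range] at ha
  obtain ⟨n, rfl⟩ : ∃ n, m = n + 1 := ⟨m - 1, by omega⟩
  have hset : (latticeSites Lx Ly).filter (fun b => periodicUniformDist Lx Ly (a1, a2) b = n + 1)
      = ((latticeSites Lx Ly).filter (fun b => periodicUniformDist Lx Ly (a1, a2) b ≤ n + 1))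
        \ ((latticeSites Lx Ly).filter (fun b => periodicUniformDist Lx Ly (a1, a2) b ≤ n)) := by
    ext b
    simp only [Finset.mem_filter, Finset.mem_sdiff, not_and]
    constructor
    · rintro ⟨hb, hd⟩
      exact ⟨⟨hb, by omega⟩, fun _ => by omega⟩
    · rintro ⟨⟨hb, hd⟩, hnd⟩
      exact ⟨hb, by have := hnd hb; omega⟩
  rw [hset, Finset.card_sdiff_of_subset (by
      intro b hb
      simp only [Finset.mem_filter] at hb ⊢
      exact ⟨hb.1, by omega⟩),
    ball_card Lx Ly a1 a2 (n+1) ha.1 ha.2 hmx hmy,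
    ball_card Lx Ly a1 a2 n ha.1 ha.2 (by omega) (by omega)]
  have : (2*(n+1)+1)*(2*(n+1)+1) = (2*n+1)*(2*n+1) + 8*(n+1) := by ring
  omega

lemma pud_self (Lx Ly : ℕ) (a : ℕ × ℕ) : periodicUniformDist Lx Ly a a = 0 := by
  simp [periodicUniformDist, Nat.dist_self]

lemma pud_comm (Lx Ly : ℕ) (a b : ℕ × ℕ) :
    periodicUniformDist Lx Ly a b = periodicUniformDist Lx Ly b a := by
  simp [periodicUniformDist, Nat.dist_comm]

lemma ordered_card (Lx Ly m : ℕ) (hm : 0 < m) (hmx : 2*m < Lx) (hmy : 2*m < Ly) :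
    (((latticeSites Lx Ly) ×ˢ (latticeSites Lx Ly)).filter
      (fun p => periodicUniformDist Lx Ly p.1 p.2 = m)).card = 8*m*(Lx*Ly) := by
  rw [Finset.card_eq_sum_card_fiberwise
      (f := Prod.fst) (t := latticeSites Lx Ly)
      (fun p hp => (Finset.mem_product.mp (Finset.mem_filter.mp hp).1).1)]
  have hfib : ∀ a ∈ latticeSites Lx Ly,
      ((((latticeSites Lx Ly) ×ˢ (latticeSites Lx Ly)).filter
        (fun p => periodicUniformDist Lx Ly p.1 p.2 = m)).filter
          (fun p => p.1 = a)).card = 8*m := by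
    intro a ha
    rw [← sphere_card Lx Ly m a ha hm hmx hmy]
    apply Finset.card_bij' (fun p _ => p.2) (fun b _ => (a, b))
    · intro p hp
      simp only [Finset.mem_filter, Finset.mem_product] at hp ⊢
      obtain ⟨⟨⟨_, h2⟩, hd⟩, h1⟩ := hp
      exact ⟨h2, h1 ▸ hd⟩
    · intro p hp
      simp only [Finset.mem_filter] at hp
      exact Prod.ext hp.2.symm rfl
    · intro b _
      rfl
    · intro b hb
      simp only [Finset.mem_filter] at hb ⊢
      exact ⟨⟨Finset.mem_product.mpr ⟨ha, hb.1⟩, hb.2⟩, trivial⟩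
  rw [Finset.sum_congr rfl hfib, Finset.sum_const, latticeSites, Finset.card_product,
    Finset.card_range, Finset.card_range, smul_eq_mul]
  ring

/-- For `0 < m` with `2m < Lx` and `2m < Ly`, the number of unordered pairs of distinct
sites of the `Lx × Ly` lattice at periodic uniform distance exactly `m` is `4 * m * Lx * Ly`. -/
theorem periodic_uniform_pair_count (Lx Ly m : ℕ) (hLx : 0 < Lx) (hLy : 0 < Ly)
    (hm : 0 < m) (hmx : 2 * m < Lx) (hmy : 2 * m < Ly) :
    (((latticeSites Lx Ly).powersetCard 2).filter
      (fun p => ∃ a ∈ p, ∃ b ∈ p, a ≠ b ∧ periodicUniformDist Lx Ly a b = m)).card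
      = 4 * m * Lx * Ly := by
  set S := latticeSites Lx Ly with hS
  set D := ((S ×ˢ S).filter (fun p => periodicUniformDist Lx Ly p.1 p.2 = m)) with hD
  set P := ((S.powersetCard 2).filter
      (fun p => ∃ a ∈ p, ∃ b ∈ p, a ≠ b ∧ periodicUniformDist Lx Ly a b = m)) with hP
  have hne : ∀ p ∈ D, p.1 ≠ p.2 := by
    intro p hp h
    rw [hD, Finset.mem_filter] at hp
    rw [h, pud_self] at hp
    omega
  have hmem : ∀ p ∈ D, ({p.1, p.2} : Finset (ℕ × ℕ)) ∈ P := by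
    intro p hp
    have hne' := hne p hp
    rw [hD, Finset.mem_filter, Finset.mem_product] at hp
    rw [hP, Finset.mem_filter, Finset.mem_powersetCard]
    refine ⟨⟨?_, Finset.card_pair hne'⟩, p.1, by simp, p.2, by simp, hne', hp.2⟩
    intro x hx
    simp only [Finset.mem_insert, Finset.mem_singleton] at hx
    rcases hx with rfl | rfl
    · exact hp.1.1
    · exact hp.1.2
  have hcount : D.card = ∑ q ∈ P, (D.filter (fun p => ({p.1, p.2} : Finset (ℕ × ℕ)) = q)).card :=
    Finset.card_eq_sum_card_fiberwise hmem
  have hfib : ∀ q ∈ P, (D.filter (fun p => ({p.1, p.2} : Finset (ℕ × ℕ)) = q)).card = 2 := by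
    intro q hq
    rw [hP, Finset.mem_filter, Finset.mem_powersetCard] at hq
    obtain ⟨⟨hsub, hcard⟩, a, ha, b, hb, hab, hd⟩ := hq
    have hq2 : q = {a, b} := by
      refine (Finset.eq_of_subset_of_card_le ?_ ?_).symm
      · intro x hx
        simp only [Finset.mem_insert, Finset.mem_singleton] at hx
        rcases hx with rfl | rfl
        · exact ha
        · exact hb
      · rw [hcard, Finset.card_pair hab]
    have hfset : D.filter (fun p => ({p.1, p.2} : Finset (ℕ × ℕ)) = q)
        = {(a, b), (b, a)} := by
      ext p
      simp only [Finset.mem_filter, Finset.mem_insert, Finset.mem_singleton]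
      constructor
      · rintro ⟨hpD, hpq⟩
        have hne' := hne p hpD
        rw [hq2] at hpq
        have h1 : p.1 ∈ ({a, b} : Finset (ℕ × ℕ)) := hpq ▸ (by simp)
        have h2 : p.2 ∈ ({a, b} : Finset (ℕ × ℕ)) := hpq ▸ (by simp)
        simp only [Finset.mem_insert, Finset.mem_singleton] at h1 h2
        rcases h1 with h1 | h1 <;> rcases h2 with h2 | h2
        · exact absurd (h1.trans h2.symm) hne'
        · exact Or.inl (Prod.ext h1 h2)
        · exact Or.inr (Prod.ext h1 h2)
        · exact absurd (h1.trans h2.symm) hne'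
      · have haS := hsub ha
        have hbS := hsub hb
        rintro (rfl | rfl)
        · exact ⟨Finset.mem_filter.mpr ⟨Finset.mem_product.mpr ⟨haS, hbS⟩, hd⟩, hq2.symm⟩
        · refine ⟨Finset.mem_filter.mpr ⟨Finset.mem_product.mpr ⟨hbS, haS⟩, ?_⟩, ?_⟩
          · rw [← pud_comm]; exact hd
          · rw [hq2, Finset.pair_comm]
    rw [hfset]
    exact Finset.card_pair (fun h => hab (congrArg Prod.fst h))
  have h2 : D.card = 2 * P.card := by
    rw [hcount, Finset.sum_congr rfl hfib, Finset.sum_const, smul_eq_mul]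
    ring
  have h3 := ordered_card Lx Ly m hm hmx hmy
  rw [← hD] at h3
  have : 8*m*(Lx*Ly) = 2*(4*m*Lx*Ly) := by ring
  omega
end

section
/- Let Lx, Ly and m be positive integers with m ≤ min(Lx, Ly) − 1. Then the number of unordered pairs {a, b} of distinct sites of the Lx × Ly lattice whose uniform (Chebyshev) distance equals m is exactly 4·m·Lx·Ly − 3·(Lx + Ly)·m² + 2·m³. -/
/-- The (non-periodic) uniform (Chebyshev) distance between two lattice sites. -/
def uniformDist (a b : ℕ × ℕ) : ℕ :=
  max (Nat.dist a.1 b.1) (Nat.dist a.2 b.2)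

open Finset

lemma inner_card (L k x : ℕ) (hx : x < L) :
    ((Finset.range L).filter (fun y => Nat.dist x y ≤ k)).card
      = min x k + min (L - 1 - x) k + 1 := by
  have h : (Finset.range L).filter (fun y => Nat.dist x y ≤ k)
      = Finset.Icc (x - k) (min (x + k) (L - 1)) := by
    ext y
    simp only [mem_filter, mem_range, Finset.mem_Icc, le_min_iff, min_le_iff]
    simp only [Nat.dist]
    omega
  rw [h, Nat.card_Icc]
  omega

lemma sum_min_card (L k : ℕ) (hk : k ≤ L) :
    2 * ∑ x ∈ Finset.range L, min x k = k * (k - 1) + 2 * (L - k) * k := by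
  rw [Finset.range_eq_Ico, ← Finset.sum_Ico_consecutive _ (Nat.zero_le k) hk]
  have h1 : ∑ x ∈ Finset.Ico 0 k, min x k = ∑ x ∈ Finset.range k, x := by
    rw [← Finset.range_eq_Ico]
    exact Finset.sum_congr rfl (fun x hx => by simp at hx; omega)
  have h2 : ∑ x ∈ Finset.Ico k L, min x k = (L - k) * k := by
    rw [Finset.sum_congr rfl (fun x hx => ?_), Finset.sum_const, Nat.card_Ico, smul_eq_mul]
    simp at hx; omega
  rw [h1, h2, Nat.mul_add, Nat.mul_assoc]
  have := Finset.sum_range_id_mul_two k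
  omega

lemma countA (L k : ℕ) (h : k + 1 ≤ L) :
    ((Finset.range L ×ˢ Finset.range L).filter (fun p => Nat.dist p.1 p.2 ≤ k)).card
      = L + (k * (k - 1) + 2 * (L - k) * k) := by
  rw [Finset.card_filter, Finset.sum_product]
  have step : ∀ x ∈ Finset.range L,
      (∑ y ∈ Finset.range L, if Nat.dist (x, y).1 (x, y).2 ≤ k then 1 else 0)
        = min x k + min (L - 1 - x) k + 1 := by
    intro x hx
    rw [← Finset.card_filter]
    exact inner_card L k x (Finset.mem_range.mp hx)
  rw [Finset.sum_congr rfl step]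
  rw [Finset.sum_add_distrib, Finset.sum_add_distrib, Finset.sum_const, Finset.card_range,
    smul_eq_mul, mul_one]
  have hrefl : ∑ x ∈ Finset.range L, min (L - 1 - x) k = ∑ x ∈ Finset.range L, min x k := by
    rw [← Finset.sum_range_reflect]
    exact Finset.sum_congr rfl (fun x hx => by simp at hx; congr 1; omega)
  rw [hrefl]
  have := sum_min_card L k (by omega)
  omega

lemma prodsplit (Lx Ly k : ℕ) :
    ((latticeSites Lx Ly ×ˢ latticeSites Lx Ly).filter
      (fun q => uniformDist q.1 q.2 ≤ k)).card
    = ((Finset.range Lx ×ˢ Finset.range Lx).filter (fun p => Nat.dist p.1 p.2 ≤ k)).card *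
      ((Finset.range Ly ×ˢ Finset.range Ly).filter (fun p => Nat.dist p.1 p.2 ≤ k)).card := by
  rw [← Finset.card_product]
  refine Finset.card_bij' (fun q _ => ((q.1.1, q.2.1), (q.1.2, q.2.2)))
    (fun p _ => ((p.1.1, p.2.1), (p.1.2, p.2.2))) ?_ ?_ (fun q _ => rfl) (fun p _ => rfl)
  · intro q hq
    simp only [latticeSites, uniformDist, mem_filter, mem_product, mem_range, max_le_iff] at hq ⊢
    tauto
  · intro p hp
    simp only [latticeSites, uniformDist, mem_filter, mem_product, mem_range, max_le_iff] at hp ⊢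
    tauto

lemma uniformDist_comm (a b : ℕ × ℕ) : uniformDist a b = uniformDist b a := by
  simp [uniformDist, Nat.dist_comm]

lemma uniformDist_ne {a b : ℕ × ℕ} {m : ℕ} (hm : 0 < m) (h : uniformDist a b = m) : a ≠ b := by
  rintro rfl
  simp [uniformDist, Nat.dist_self] at h
  omega

lemma pairing (Lx Ly m : ℕ) (hm : 0 < m) :
    ((latticeSites Lx Ly ×ˢ latticeSites Lx Ly).filter
      (fun q => uniformDist q.1 q.2 = m)).card
    = 2 * (((latticeSites Lx Ly).powersetCard 2).filter
      (fun p => ∃ a ∈ p, ∃ b ∈ p, a ≠ b ∧ uniformDist a b = m)).card := by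
  set S := latticeSites Lx Ly with hS
  set F := (S.powersetCard 2).filter
      (fun p => ∃ a ∈ p, ∃ b ∈ p, a ≠ b ∧ uniformDist a b = m) with hF
  have hmap : ∀ q ∈ (S ×ˢ S).filter (fun q => uniformDist q.1 q.2 = m),
      ({q.1, q.2} : Finset (ℕ × ℕ)) ∈ F := by
    intro q hq
    simp only [mem_filter, mem_product] at hq
    obtain ⟨⟨h1, h2⟩, hd⟩ := hq
    have hne' := uniformDist_ne hm hd
    refine mem_filter.mpr ⟨Finset.mem_powersetCard.mpr ⟨?_, ?_⟩, ?_⟩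
    · intro x hx
      simp only [mem_insert, mem_singleton] at hx
      rcases hx with rfl | rfl <;> assumption
    · rw [Finset.card_insert_of_notMem (by simp [hne']), Finset.card_singleton]
    · exact ⟨q.1, by simp, q.2, by simp, hne', hd⟩
  rw [Finset.card_eq_sum_card_fiberwise hmap]
  have hfib : ∀ p ∈ F,
      (((S ×ˢ S).filter (fun q => uniformDist q.1 q.2 = m)).filter
        (fun q => ({q.1, q.2} : Finset (ℕ × ℕ)) = p)).card = 2 := by
    intro p hp
    simp only [hF, mem_filter] at hp
    obtain ⟨hp1, a, ha, b, hb, hab, hd⟩ := hp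
    obtain ⟨hsub, hcard⟩ := Finset.mem_powersetCard.mp hp1
    have hpeq : ({a, b} : Finset (ℕ × ℕ)) = p := by
      apply Finset.eq_of_subset_of_card_le
      · intro x hx
        simp only [mem_insert, mem_singleton] at hx
        rcases hx with rfl | rfl <;> assumption
      · rw [hcard, Finset.card_insert_of_notMem (by simp [hab]), Finset.card_singleton]
    have hfset : ((S ×ˢ S).filter (fun q => uniformDist q.1 q.2 = m)).filter
        (fun q => ({q.1, q.2} : Finset (ℕ × ℕ)) = p) = {(a, b), (b, a)} := by
      ext q
      simp only [mem_filter, mem_product, mem_insert, mem_singleton]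
      constructor
      · rintro ⟨⟨⟨hq1, hq2⟩, hdq⟩, hqp⟩
        rw [← hpeq] at hqp
        have e1 : q.1 ∈ ({a, b} : Finset (ℕ × ℕ)) := by rw [← hqp]; simp
        have e2 : q.2 ∈ ({a, b} : Finset (ℕ × ℕ)) := by rw [← hqp]; simp
        have hne' := uniformDist_ne hm hdq
        simp only [mem_insert, mem_singleton] at e1 e2
        obtain ⟨q1, q2⟩ := q
        simp only at e1 e2 hne' ⊢
        rcases e1 with rfl | rfl <;> rcases e2 with rfl | rfl <;> simp_all
      · rintro (rfl | rfl)
        · exact ⟨⟨⟨hsub ha, hsub hb⟩, hd⟩, hpeq⟩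
        · exact ⟨⟨⟨hsub hb, hsub ha⟩, (uniformDist_comm b a).trans hd⟩,
            (Finset.pair_comm b a).trans hpeq⟩
    rw [hfset, Finset.card_insert_of_notMem
        (by simp only [mem_singleton]; exact fun h => hab (congrArg Prod.fst h)),
      Finset.card_singleton]
  rw [Finset.sum_congr rfl hfib, Finset.sum_const, smul_eq_mul, mul_comm]

lemma split_card (P : Finset ((ℕ × ℕ) × (ℕ × ℕ))) (m : ℕ) (hm : 0 < m) :
    (P.filter (fun q => uniformDist q.1 q.2 = m)).card
      + (P.filter (fun q => uniformDist q.1 q.2 ≤ m - 1)).card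
    = (P.filter (fun q => uniformDist q.1 q.2 ≤ m)).card := by
  rw [← Finset.card_union_of_disjoint, ← Finset.filter_or]
  · apply congrArg
    apply Finset.filter_congr
    intro q _
    omega
  · rw [Finset.disjoint_left]
    intro q h1 h2
    simp only [mem_filter] at h1 h2
    omega

lemma countA_int (L k : ℕ) (h : k + 1 ≤ L) :
    (((Finset.range L ×ˢ Finset.range L).filter (fun p => Nat.dist p.1 p.2 ≤ k)).card : ℤ)
      = (2 * k + 1) * L - k * (k + 1) := by
  rw [countA L k h]
  have h1 : k * (k - 1) = k * k - k := by
    rw [mul_comm, Nat.sub_one_mul]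
  rw [h1]
  push_cast [Nat.cast_sub (by nlinarith : k ≤ k * k), Nat.cast_sub (by omega : k ≤ L)]
  ring

/-- For `0 < m ≤ min Lx Ly − 1`, the number of unordered pairs of distinct sites
of the `Lx × Ly` lattice at uniform distance exactly `m` is
`4 m Lx Ly − 3 (Lx + Ly) m² + 2 m³`. -/
theorem nonperiodic_uniform_pair_count (Lx Ly m : ℕ) (hLx : 0 < Lx) (hLy : 0 < Ly)
    (hm : 0 < m) (hmle : m ≤ min Lx Ly - 1) :
    (((((latticeSites Lx Ly).powersetCard 2).filter
      (fun p => ∃ a ∈ p, ∃ b ∈ p, a ≠ b ∧ uniformDist a b = m)).card) : ℤ)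
      = 4 * m * Lx * Ly - 3 * (Lx + Ly) * m ^ 2 + 2 * m ^ 3 := by
  have hx : m + 1 ≤ Lx := by omega
  have hy : m + 1 ≤ Ly := by omega
  obtain ⟨k, rfl⟩ : ∃ k, m = k + 1 := ⟨m - 1, by omega⟩
  have key := split_card (latticeSites Lx Ly ×ˢ latticeSites Lx Ly) (k + 1) (by omega)
  rw [pairing Lx Ly (k + 1) (by omega), prodsplit, prodsplit] at key
  simp only [Nat.add_sub_cancel] at key
  have keyZ := congrArg (Nat.cast : ℕ → ℤ) key
  push_cast at keyZ
  rw [countA_int Lx (k + 1) hx, countA_int Ly (k + 1) hy,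
    countA_int Lx k (by omega), countA_int Ly k (by omega)] at keyZ
  apply mul_left_cancel₀ (two_ne_zero (α := ℤ))
  push_cast at keyZ ⊢
  linear_combination keyZ
end

section
/- Let Lx, Ly and m be positive integers with 2m < Lx and 2m < Ly. Then the number of unordered pairs {a, b} of distinct sites of the Lx × Ly lattice such that the periodic taxicab distance between a and b equals m and the pair crosses the horizontal boundary (i.e. |a₂ − b₂| > Ly − |a₂ − b₂|) is exactly Lx · m². -/
/-- The taxicab distance under periodic boundary conditions on an `Lx × Ly` lattice. -/
def periodicTaxicabDist (Lx Ly : ℕ) (a b : ℕ × ℕ) : ℕ :=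
  min (Nat.dist a.1 b.1) (Lx - Nat.dist a.1 b.1) +
    min (Nat.dist a.2 b.2) (Ly - Nat.dist a.2 b.2)

lemma dist_def (a b : ℕ) : Nat.dist a b = a - b + (b - a) := rfl

lemma auxA (L x t : ℕ) (hx : x < L) (ht : t < L) : ((x + t) % L + L - x) % L = t := by
  rcases lt_or_ge (x + t) L with h | h
  · rw [Nat.mod_eq_of_lt h]
    have h2 : x + t + L - x = L + t := by omega
    rw [h2, Nat.add_mod_left, Nat.mod_eq_of_lt ht]
  · rw [Nat.mod_eq_sub_mod h, Nat.mod_eq_of_lt (show x + t - L < L by omega)]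
    have h2 : x + t - L + L - x = t := by omega
    rw [h2, Nat.mod_eq_of_lt ht]

lemma auxB (L a b : ℕ) (ha : a < L) (hb : b < L) :
    (a + (b + L - a) % L) % L = b ∧
    min (Nat.dist a b) (L - Nat.dist a b) =
      min ((b + L - a) % L) (L - (b + L - a) % L) := by
  rcases le_or_gt a b with h | h
  · have hd : (b + L - a) % L = b - a := by
      have h2 : b + L - a = L + (b - a) := by omega
      rw [h2, Nat.add_mod_left, Nat.mod_eq_of_lt (by omega)]
    constructor
    · rw [hd, show a + (b - a) = b by omega, Nat.mod_eq_of_lt hb]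
    · rw [hd, dist_def]; omega
  · have hd : (b + L - a) % L = L - (a - b) := by
      have h2 : b + L - a = L - (a - b) := by omega
      rw [h2, Nat.mod_eq_of_lt (by omega)]
    constructor
    · rw [hd, show a + (L - (a - b)) = L + b by omega, Nat.add_mod_left,
        Nat.mod_eq_of_lt hb]
    · rw [hd, dist_def]; omega

/-- For `0 < m` with `2m < Lx` and `2m < Ly`, the number of unordered pairs of distinct
sites at periodic taxicab distance `m` that cross the horizontal boundary
(`|a₂ − b₂| > Ly − |a₂ − b₂|`) is exactly `Lx * m ^ 2`. -/
theorem periodic_taxicab_horizontal_crossing_count (Lx Ly m : ℕ)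
    (hLx : 0 < Lx) (hLy : 0 < Ly) (hm : 0 < m) (hmx : 2 * m < Lx) (hmy : 2 * m < Ly) :
    (((latticeSites Lx Ly).powersetCard 2).filter
      (fun p => ∃ a ∈ p, ∃ b ∈ p, a ≠ b ∧ periodicTaxicabDist Lx Ly a b = m ∧
        Ly - Nat.dist a.2 b.2 < Nat.dist a.2 b.2)).card
      = Lx * m ^ 2 := by
  classical
  set T : Finset ((ℕ × ℕ) × (ℕ × ℕ)) :=
    ((latticeSites Lx Ly) ×ˢ (latticeSites Lx Ly)).filter
      (fun q => q.1.2 < q.2.2 ∧ periodicTaxicabDist Lx Ly q.1 q.2 = m ∧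
        Ly - Nat.dist q.1.2 q.2.2 < Nat.dist q.1.2 q.2.2) with hTdef
  have memT : ∀ a b : ℕ × ℕ, (a, b) ∈ T ↔
      (a.1 < Lx ∧ a.2 < Ly) ∧ (b.1 < Lx ∧ b.2 < Ly) ∧
      a.2 < b.2 ∧ periodicTaxicabDist Lx Ly a b = m ∧
      Ly - Nat.dist a.2 b.2 < Nat.dist a.2 b.2 := by
    intro a b
    simp [hTdef, latticeSites, Finset.mem_filter, Finset.mem_product, and_assoc]
  -- Step 1: the unordered count equals T.card
  have step1 : (((latticeSites Lx Ly).powersetCard 2).filter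
      (fun p => ∃ a ∈ p, ∃ b ∈ p, a ≠ b ∧ periodicTaxicabDist Lx Ly a b = m ∧
        Ly - Nat.dist a.2 b.2 < Nat.dist a.2 b.2)).card = T.card := by
    symm
    apply Finset.card_bij (fun q _ => ({q.1, q.2} : Finset (ℕ × ℕ)))
    · -- maps into
      rintro ⟨a, b⟩ hq
      rw [memT] at hq
      obtain ⟨ha, hb, hlt, hdist, hcross⟩ := hq
      have hne : a ≠ b := fun h => by rw [h] at hlt; omega
      simp only [Finset.mem_filter, Finset.mem_powersetCard]
      refine ⟨⟨?_, ?_⟩, a, by simp, b, by simp, hne, hdist, hcross⟩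
      · intro x hx
        simp only [Finset.mem_insert, Finset.mem_singleton] at hx
        rcases hx with rfl | rfl <;>
          simp [latticeSites, Finset.mem_product, ha.1, ha.2, hb.1, hb.2]
      · rw [Finset.card_pair hne]
    · -- injective
      rintro ⟨a, b⟩ h1 ⟨c, d⟩ h2 heq
      rw [memT] at h1 h2
      have hab : a.2 < b.2 := h1.2.2.1
      have hcd : c.2 < d.2 := h2.2.2.1
      have hma : a ∈ ({c, d} : Finset (ℕ × ℕ)) := by
        rw [show ({c, d} : Finset (ℕ × ℕ)) = {a, b} from heq.symm]; simp
      have hmb : b ∈ ({c, d} : Finset (ℕ × ℕ)) := by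
        rw [show ({c, d} : Finset (ℕ × ℕ)) = {a, b} from heq.symm]; simp
      have hmc : c ∈ ({a, b} : Finset (ℕ × ℕ)) := by
        rw [show ({a, b} : Finset (ℕ × ℕ)) = {c, d} from heq]; simp
      have hmd : d ∈ ({a, b} : Finset (ℕ × ℕ)) := by
        rw [show ({a, b} : Finset (ℕ × ℕ)) = {c, d} from heq]; simp
      simp only [Finset.mem_insert, Finset.mem_singleton] at hma hmb hmc hmd
      rcases hma with rfl | rfl
      · rcases hmb with rfl | rfl
        · rcases hmd with h | h
          · exfalso; rw [h] at hcd; omega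
          · exact Prod.ext rfl h.symm
        · rfl
      · rcases hmb with rfl | rfl
        · exfalso; omega
        · exfalso; rcases hmc with h | h <;> rw [h] at hcd <;> omega
    · -- surjective
      intro p hp
      simp only [Finset.mem_filter, Finset.mem_powersetCard] at hp
      obtain ⟨⟨hsub, hcard⟩, a, hap, b, hbp, hne, hdist, hcross⟩ := hp
      have hane : a.2 ≠ b.2 := by
        intro h
        rw [h, dist_def] at hcross
        omega
      have hpa : a ∈ latticeSites Lx Ly := hsub hap
      have hpb : b ∈ latticeSites Lx Ly := hsub hbp
      simp only [latticeSites, Finset.mem_product, Finset.mem_range] at hpa hpb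
      have hpair : ∀ x y : ℕ × ℕ, x ∈ p → y ∈ p → x ≠ y →
          ({x, y} : Finset (ℕ × ℕ)) = p := by
        intro x y hx hy hxy
        apply Finset.eq_of_subset_of_card_le
        · intro z hz
          simp only [Finset.mem_insert, Finset.mem_singleton] at hz
          rcases hz with rfl | rfl <;> assumption
        · rw [hcard, Finset.card_pair hxy]
      rcases lt_or_gt_of_ne hane with h | h
      · exact ⟨(a, b), by rw [memT]; exact ⟨hpa, hpb, h, hdist, hcross⟩,
          hpair a b hap hbp hne⟩
      · refine ⟨(b, a), ?_, hpair b a hbp hap hne.symm⟩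
        rw [memT]
        refine ⟨hpb, hpa, h, ?_, ?_⟩
        · rw [show periodicTaxicabDist Lx Ly b a = periodicTaxicabDist Lx Ly a b from by
            simp [periodicTaxicabDist, Nat.dist_comm]]
          exact hdist
        · rw [Nat.dist_comm]
          exact hcross
  rw [step1]
  -- Step 2: bijection with range Lx ×ˢ range m ×ˢ range m
  have step2 : T.card = (Finset.range Lx ×ˢ Finset.range m ×ˢ Finset.range m).card := by
    apply Finset.card_nbij'
      (fun q => (q.1.1,
        if 2 * ((q.2.1 + Lx - q.1.1) % Lx) ≤ Lx
        then (Ly - (q.2.2 - q.1.2) - 1, q.1.2)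
        else (q.1.2, Ly - (q.2.2 - q.1.2))))
      (fun r => if r.2.2 ≤ r.2.1
        then ((r.1, r.2.2), ((r.1 + (m - (r.2.1 + 1))) % Lx, r.2.2 + Ly - (r.2.1 + 1)))
        else ((r.1, r.2.1), ((r.1 + (Lx - (m - r.2.2))) % Lx, r.2.1 + Ly - r.2.2)))
    · -- forward maps into
      rintro ⟨a, b⟩ hq
      rw [Finset.mem_coe, memT] at hq
      obtain ⟨ha, hb, hlt, hdist, hcross⟩ := hq
      try dsimp only
      have hdy : Nat.dist a.2 b.2 = b.2 - a.2 := by rw [dist_def]; omega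
      rw [hdy] at hcross
      obtain ⟨hB1, hB2⟩ := auxB Lx a.1 b.1 ha.1 hb.1
      set d := (b.1 + Lx - a.1) % Lx with hd
      have hdlt : d < Lx := Nat.mod_lt _ hLx
      rw [periodicTaxicabDist, hB2, hdy] at hdist
      simp only [Finset.mem_coe, Finset.mem_product, Finset.mem_range]
      rcases le_or_gt (2 * d) Lx with h2d | h2d
      · rw [if_pos h2d]
        exact ⟨ha.1, by omega, by omega⟩
      · rw [if_neg (show ¬ (2 * d ≤ Lx) by omega)]
        exact ⟨ha.1, by omega, by omega⟩
    · -- backward maps into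
      rintro ⟨x, u, v⟩ hr
      simp only [Finset.mem_coe, Finset.mem_product, Finset.mem_range] at hr
      obtain ⟨hx, hu, hv⟩ := hr
      try dsimp only
      rcases le_or_gt v u with huv | huv
      · rw [if_pos huv]
        set t := m - (u + 1) with htdef
        have htlt : t < Lx := by omega
        have hbx := auxA Lx x t hx htlt
        obtain ⟨_, hB2⟩ := auxB Lx x ((x + t) % Lx) hx (Nat.mod_lt _ hLx)
        rw [Finset.mem_coe, memT]
        refine ⟨⟨hx, by omega⟩, ⟨Nat.mod_lt _ hLx, by omega⟩, by omega, ?_, ?_⟩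
        · rw [periodicTaxicabDist]
          try dsimp only
          rw [hB2, hbx, show Nat.dist v (v + Ly - (u + 1)) = Ly - (u + 1) from by
            rw [dist_def]; omega]
          omega
        · try dsimp only
          rw [show Nat.dist v (v + Ly - (u + 1)) = Ly - (u + 1) from by
            rw [dist_def]; omega]
          omega
      · rw [if_neg (show ¬ (v ≤ u) by omega)]
        set t := Lx - (m - v) with htdef
        have htlt : t < Lx := by omega
        have hbx := auxA Lx x t hx htlt
        obtain ⟨_, hB2⟩ := auxB Lx x ((x + t) % Lx) hx (Nat.mod_lt _ hLx)
        rw [Finset.mem_coe, memT]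
        refine ⟨⟨hx, by omega⟩, ⟨Nat.mod_lt _ hLx, by omega⟩, by omega, ?_, ?_⟩
        · rw [periodicTaxicabDist]
          try dsimp only
          rw [hB2, hbx, show Nat.dist u (u + Ly - v) = Ly - v from by
            rw [dist_def]; omega]
          omega
        · try dsimp only
          rw [show Nat.dist u (u + Ly - v) = Ly - v from by
            rw [dist_def]; omega]
          omega
    · -- left inverse
      rintro ⟨a, b⟩ hq
      rw [Finset.mem_coe, memT] at hq
      obtain ⟨ha, hb, hlt, hdist, hcross⟩ := hq
      try dsimp only
      have hdy : Nat.dist a.2 b.2 = b.2 - a.2 := by rw [dist_def]; omega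
      rw [hdy] at hcross
      obtain ⟨hB1, hB2⟩ := auxB Lx a.1 b.1 ha.1 hb.1
      set d := (b.1 + Lx - a.1) % Lx with hd
      have hdlt : d < Lx := Nat.mod_lt _ hLx
      rw [periodicTaxicabDist, hB2, hdy] at hdist
      rcases le_or_gt (2 * d) Lx with h2d | h2d
      · have hdval : d = m - (Ly - (b.2 - a.2)) := by omega
        rw [if_pos h2d]
        try dsimp only
        have hcond : a.2 ≤ Ly - (b.2 - a.2) - 1 := by omega
        rw [if_pos hcond]
        try dsimp only
        rw [show m - (Ly - (b.2 - a.2) - 1 + 1) = d from by omega, hB1,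
          show a.2 + Ly - (Ly - (b.2 - a.2) - 1 + 1) = b.2 from by omega]
      · have hdval : Lx - d = m - (Ly - (b.2 - a.2)) := by omega
        rw [if_neg (show ¬ (2 * d ≤ Lx) by omega)]
        try dsimp only
        have hcond : ¬ (Ly - (b.2 - a.2) ≤ a.2) := by omega
        rw [if_neg hcond]
        try dsimp only
        rw [show Lx - (m - (Ly - (b.2 - a.2))) = d from by omega, hB1,
          show a.2 + Ly - (Ly - (b.2 - a.2)) = b.2 from by omega]
    · -- right inverse
      rintro ⟨x, u, v⟩ hr
      simp only [Finset.mem_coe, Finset.mem_product, Finset.mem_range] at hr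
      obtain ⟨hx, hu, hv⟩ := hr
      try dsimp only
      rcases le_or_gt v u with huv | huv
      · rw [if_pos huv]
        try dsimp only
        set t := m - (u + 1) with htdef
        have htlt : t < Lx := by omega
        have hbx := auxA Lx x t hx htlt
        rw [hbx, if_pos (show 2 * t ≤ Lx from by omega)]
        try dsimp only
        rw [show Ly - (v + Ly - (u + 1) - v) - 1 = u from by omega]
      · rw [if_neg (show ¬ (v ≤ u) by omega)]
        try dsimp only
        set t := Lx - (m - v) with htdef
        have htlt : t < Lx := by omega
        have hbx := auxA Lx x t hx htlt
        rw [hbx, if_neg (show ¬ (2 * t ≤ Lx) from by omega)]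
        try dsimp only
        rw [show Ly - (u + Ly - v - u) = v from by omega]
  rw [step2]
  simp only [Finset.card_product, Finset.card_range]
  ring
end

section
/- Let Lx, Ly and m be positive integers with 2m < Lx and 2m < Ly. Then the number of unordered pairs {a, b} of distinct sites of the Lx × Ly lattice such that the periodic taxicab distance between a and b equals m and the pair crosses both boundaries (i.e. |a₁ − b₁| > Lx − |a₁ − b₁| and |a₂ − b₂| > Ly − |a₂ − b₂|) is exactly (m³ − m)/3; equivalently, three times this count equals m³ − m. -/
lemma sumCube (m : ℕ) : 6 * (∑ u ∈ Finset.range (m+1), u * (m - u)) + m = m ^ 3 := by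
  induction m with
  | zero => simp
  | succ m ih =>
    have h1 : ∑ u ∈ Finset.range (m+2), u * (m + 1 - u)
        = (∑ u ∈ Finset.range (m+1), u * (m - u)) + ∑ u ∈ Finset.range (m+1), u := by
      rw [Finset.sum_range_succ]
      rw [← Finset.sum_add_distrib]
      simp only [Nat.sub_self, Nat.mul_zero, Nat.add_zero]
      exact Finset.sum_congr rfl fun u hu => by
        simp only [Finset.mem_range] at hu
        rw [show m + 1 - u = (m - u) + 1 by omega, Nat.mul_add, Nat.mul_one]
    have h2 : (∑ u ∈ Finset.range (m+1), u) * 2 = (m+1) * m := Finset.sum_range_id_mul_two _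
    have : 6 * ((∑ u ∈ Finset.range (m+1), u * (m - u)) + ∑ u ∈ Finset.range (m+1), u) + (m+1)
        = (m+1)^3 := by
      have := ih
      nlinarith [h2]
    rw [h1]; exact this

/-- slices in one direction -/
lemma crossSlice (L u : ℕ) (hu : 2*u < L) :
    (((Finset.range L) ×ˢ (Finset.range L)).filter
      (fun q => L - Nat.dist q.1 q.2 = u ∧ L - Nat.dist q.1 q.2 < Nat.dist q.1 q.2)).card
    = 2 * u := by
  have hset : ((Finset.range L) ×ˢ (Finset.range L)).filter
      (fun q => L - Nat.dist q.1 q.2 = u ∧ L - Nat.dist q.1 q.2 < Nat.dist q.1 q.2)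
      = ((Finset.range u).image (fun y => (y + (L - u), y))) ∪
        ((Finset.range u).image (fun x => (x, x + (L - u)))) := by
    ext ⟨p, q⟩
    simp only [Finset.mem_filter, Finset.mem_product, Finset.mem_range, Finset.mem_union,
      Finset.mem_image, Nat.dist_eq_max_sub_min, Prod.mk.injEq]
    constructor
    · rintro ⟨⟨hp, hq⟩, h1, h2⟩
      rcases le_or_gt q p with h | h
      · exact Or.inl ⟨q, by omega, by omega, rfl⟩
      · exact Or.inr ⟨p, by omega, rfl, by omega⟩
    · rintro (⟨y, hy, h1, h2⟩ | ⟨x, hx, h1, h2⟩) <;> omega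
  rw [hset, Finset.card_union_of_disjoint, Finset.card_image_of_injective,
    Finset.card_image_of_injective, Finset.card_range]
  · omega
  · intro a b hab; have := congrArg Prod.fst hab; simp at this; omega
  · intro a b hab; simpa using congrArg Prod.snd hab
  · simp only [Finset.disjoint_left, Finset.mem_image, Finset.mem_range]
    rintro ⟨p, q⟩ ⟨y, hy, h⟩ ⟨x, hx, h'⟩
    simp only [Prod.mk.injEq] at h h'
    omega

/-- For `0 < m` with `2m < Lx` and `2m < Ly`, three times the number of unordered pairs
of distinct sites at periodic taxicab distance `m` that cross both boundaries
(`|a₁ − b₁| > Lx − |a₁ − b₁|` and `|a₂ − b₂| > Ly − |a₂ − b₂|`) equals `m³ − m`. -/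
theorem periodic_taxicab_double_crossing_count (Lx Ly m : ℕ)
    (hLx : 0 < Lx) (hLy : 0 < Ly) (hm : 0 < m) (hmx : 2 * m < Lx) (hmy : 2 * m < Ly) :
    3 * (((latticeSites Lx Ly).powersetCard 2).filter
      (fun p => ∃ a ∈ p, ∃ b ∈ p, a ≠ b ∧ periodicTaxicabDist Lx Ly a b = m ∧
        Lx - Nat.dist a.1 b.1 < Nat.dist a.1 b.1 ∧
        Ly - Nat.dist a.2 b.2 < Nat.dist a.2 b.2)).card
      = m ^ 3 - m := by
  classical
  set F := (((latticeSites Lx Ly).powersetCard 2).filter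
      (fun p => ∃ a ∈ p, ∃ b ∈ p, a ≠ b ∧ periodicTaxicabDist Lx Ly a b = m ∧
        Lx - Nat.dist a.1 b.1 < Nat.dist a.1 b.1 ∧
        Ly - Nat.dist a.2 b.2 < Nat.dist a.2 b.2)) with hF
  set T := ((latticeSites Lx Ly) ×ˢ (latticeSites Lx Ly)).filter
      (fun q => periodicTaxicabDist Lx Ly q.1 q.2 = m ∧
        Lx - Nat.dist q.1.1 q.2.1 < Nat.dist q.1.1 q.2.1 ∧
        Ly - Nat.dist q.1.2 q.2.2 < Nat.dist q.1.2 q.2.2) with hT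
  have hB : T.card = ∑ u ∈ Finset.range (m+1), 2*u * (2*(m-u)) := by
    rw [Finset.card_eq_sum_card_fiberwise
      (f := fun q => Lx - Nat.dist q.1.1 q.2.1) (t := Finset.range (m+1)) ?_]
    · refine Finset.sum_congr rfl fun u hu => ?_
      simp only [Finset.mem_range] at hu
      rw [← crossSlice Lx u (by omega), ← crossSlice Ly (m - u) (by omega),
        ← Finset.card_product]
      refine Finset.card_nbij' (fun q => ((q.1.1, q.2.1), (q.1.2, q.2.2)))
        (fun r => ((r.1.1, r.2.1), (r.1.2, r.2.2))) ?_ ?_ ?_ ?_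
      · rintro ⟨⟨a1, a2⟩, b1, b2⟩ hq
        simp only [hT, latticeSites, periodicTaxicabDist, Finset.coe_filter,
          Finset.mem_product, Finset.mem_range, Set.mem_setOf_eq, Finset.mem_filter,
          Finset.mem_coe, Nat.dist_eq_max_sub_min] at hq ⊢
        omega
      · rintro ⟨⟨a1, b1⟩, a2, b2⟩ hq
        simp only [hT, latticeSites, periodicTaxicabDist, Finset.coe_filter,
          Finset.mem_product, Finset.mem_range, Set.mem_setOf_eq, Finset.mem_filter,
          Finset.mem_coe, Nat.dist_eq_max_sub_min] at hq ⊢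
        omega
      · rintro ⟨⟨a1, a2⟩, b1, b2⟩ _; rfl
      · rintro ⟨⟨a1, b1⟩, a2, b2⟩ _; rfl
    · rintro ⟨⟨a1, a2⟩, b1, b2⟩ hq
      simp only [hT, latticeSites, periodicTaxicabDist, Finset.mem_product,
        Finset.mem_range, Finset.mem_filter, Finset.mem_coe, Nat.dist_eq_max_sub_min] at hq ⊢
      omega
  have hne : ∀ q ∈ T, q.1 ≠ q.2 := by
    rintro ⟨a, b⟩ hq hab
    rw [hT, Finset.mem_filter] at hq
    rw [hab] at hq
    simp [Nat.dist] at hq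
  have hA : T.card = 2 * F.card := by
    rw [Finset.card_eq_sum_card_fiberwise
      (f := fun q => ({q.1, q.2} : Finset (ℕ × ℕ))) (t := F) ?_]
    · rw [Finset.sum_congr rfl (g := fun _ => 2) ?_, Finset.sum_const, smul_eq_mul, mul_comm]
      intro s hs
      rw [hF, Finset.mem_filter, Finset.mem_powersetCard] at hs
      obtain ⟨⟨hsub, hcard⟩, a, ha, b, hb, hab, hP⟩ := hs
      have hseq : s = {a, b} := by
        refine (Finset.eq_of_subset_of_card_le ?_ ?_).symm
        · intro x hx; simp only [Finset.mem_insert, Finset.mem_singleton] at hx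
          rcases hx with rfl | rfl <;> assumption
        · rw [hcard, Finset.card_pair hab]
      have habT : (a, b) ∈ T := by
        rw [hT, Finset.mem_filter, Finset.mem_product]
        exact ⟨⟨hsub ha, hsub hb⟩, hP⟩
      have hbaT : (b, a) ∈ T := by
        rw [hT, Finset.mem_filter, Finset.mem_product]
        refine ⟨⟨hsub hb, hsub ha⟩, ?_, ?_, ?_⟩
        · rw [show periodicTaxicabDist Lx Ly b a = periodicTaxicabDist Lx Ly a b by
            simp [periodicTaxicabDist, Nat.dist_comm]]
          exact hP.1
        · rw [Nat.dist_comm]; exact hP.2.1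
        · rw [Nat.dist_comm]; exact hP.2.2
      have hT' : T.filter (fun q => ({q.1, q.2} : Finset (ℕ × ℕ)) = s)
          = {(a, b), (b, a)} := by
        ext ⟨x, y⟩
        simp only [Finset.mem_filter, Finset.mem_insert, Finset.mem_singleton, Prod.mk.injEq]
        constructor
        · rintro ⟨hxy, hset⟩
          have hxyne : x ≠ y := hne (x, y) hxy
          rw [hseq] at hset
          have hx : x ∈ ({a, b} : Finset (ℕ × ℕ)) := hset ▸ (by simp)
          have hy : y ∈ ({a, b} : Finset (ℕ × ℕ)) := hset ▸ (by simp)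
          simp only [Finset.mem_insert, Finset.mem_singleton] at hx hy
          rcases hx with rfl | rfl <;> rcases hy with rfl | rfl
          · exact absurd rfl hxyne
          · exact Or.inl ⟨rfl, rfl⟩
          · exact Or.inr ⟨rfl, rfl⟩
          · exact absurd rfl hxyne
        · rintro (⟨rfl, rfl⟩ | ⟨rfl, rfl⟩)
          · exact ⟨habT, hseq.symm⟩
          · exact ⟨hbaT, by rw [Finset.pair_comm]; exact hseq.symm⟩
      rw [hT', Finset.card_pair (fun h => hab (congrArg Prod.fst h))]
    · rintro ⟨a, b⟩ hq
      have hab : a ≠ b := hne (a, b) hq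
      rw [Finset.mem_coe, hT, Finset.mem_filter, Finset.mem_product] at hq
      rw [Finset.mem_coe, hF, Finset.mem_filter, Finset.mem_powersetCard]
      refine ⟨⟨?_, Finset.card_pair hab⟩, a, by simp, b, by simp, hab, hq.2⟩
      intro x hx; simp only [Finset.mem_insert, Finset.mem_singleton] at hx
      rcases hx with rfl | rfl
      · exact hq.1.1
      · exact hq.1.2
  have hS := sumCube m
  have hmm : m ≤ m ^ 3 := Nat.le_self_pow (by norm_num) m
  have hsum : 3 * ∑ u ∈ Finset.range (m+1), 2*u * (2*(m-u))
      = 12 * ∑ u ∈ Finset.range (m+1), u * (m-u) := by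
    rw [Finset.mul_sum, Finset.mul_sum]
    exact Finset.sum_congr rfl fun u _ => by ring
  omega
end

section
/- Let Lx, Ly and m be positive integers with 2m < Lx and 2m < Ly. Let s₁ᵖ(m) be the number of unordered pairs of distinct sites of the Lx × Ly lattice at periodic taxicab distance m, and s₁ⁿ(m) the number of unordered pairs at ordinary (non-periodic) taxicab distance m. Then the remainder r₁(m) = s₁ᵖ(m) − s₁ⁿ(m) satisfies 3·r₁(m) = 3·(Lx + Ly)·m² − (m³ − m), i.e. r₁(m) = (Lx + Ly)m² − (m³ − m)/3. -/
open Finset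

/-- doubling: ordered pairs vs 2-element subsets -/
lemma aux_two_mul_card {α : Type*} [DecidableEq α] (s : Finset α)
    (D : α → α → Prop) [DecidableRel D] (hsymm : ∀ a b, D a b → D b a) :
    ((s ×ˢ s).filter (fun q => q.1 ≠ q.2 ∧ D q.1 q.2)).card =
      2 * ((s.powersetCard 2).filter
        (fun p => ∃ a ∈ p, ∃ b ∈ p, a ≠ b ∧ D a b)).card := by
  set T := (s ×ˢ s).filter (fun q => q.1 ≠ q.2 ∧ D q.1 q.2) with hT
  set U := (s.powersetCard 2).filter
      (fun p => ∃ a ∈ p, ∃ b ∈ p, a ≠ b ∧ D a b) with hU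
  have hmap : ∀ q ∈ T, ({q.1, q.2} : Finset α) ∈ U := by
    intro q hq
    rw [hT, mem_filter, mem_product] at hq
    obtain ⟨⟨h1, h2⟩, hne, hD⟩ := hq
    refine mem_filter.2 ⟨mem_powersetCard.2 ⟨?_, ?_⟩,
      ⟨q.1, by simp, q.2, by simp, hne, hD⟩⟩
    · intro x hx
      rcases mem_insert.1 hx with rfl | hx
      · exact h1
      · rw [mem_singleton] at hx; subst hx; exact h2
    · rw [card_insert_of_notMem (by simpa using hne), card_singleton]
  rw [card_eq_sum_card_fiberwise hmap]
  have hfib : ∀ p ∈ U, (T.filter (fun q => ({q.1, q.2} : Finset α) = p)).card = 2 := by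
    intro p hp
    rw [hU, mem_filter] at hp
    obtain ⟨hps, x, hx, y, hy, hxy, hD⟩ := hp
    rw [mem_powersetCard] at hps
    obtain ⟨hsub, hcard⟩ := hps
    have hpxy : p = {x, y} := by
      refine (Finset.eq_of_subset_of_card_le ?_ ?_).symm
      · intro a ha
        rcases mem_insert.1 ha with rfl | ha
        · exact hx
        · rw [mem_singleton] at ha; subst ha; exact hy
      · rw [hcard, card_insert_of_notMem (by simpa using hxy), card_singleton]
    have hset : T.filter (fun q => ({q.1, q.2} : Finset α) = p) = {(x, y), (y, x)} := by
      ext q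
      rw [mem_filter, hT, mem_filter, mem_product, hpxy]
      constructor
      · rintro ⟨⟨⟨hq1, hq2⟩, hne, hDq⟩, hset⟩
        have h1 : q.1 ∈ ({x, y} : Finset α) := by rw [← hset]; simp
        have h2 : q.2 ∈ ({x, y} : Finset α) := by rw [← hset]; simp
        simp only [mem_insert, mem_singleton] at h1 h2 ⊢
        rcases h1 with h1 | h1 <;> rcases h2 with h2 | h2
        · exact absurd (h1.trans h2.symm) hne
        · left; exact Prod.ext h1 h2
        · right; exact Prod.ext h1 h2
        · exact absurd (h1.trans h2.symm) hne
      · intro hq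
        simp only [mem_insert, mem_singleton] at hq
        rcases hq with rfl | rfl
        · exact ⟨⟨⟨hsub (hpxy ▸ hx), hsub (hpxy ▸ hy)⟩, hxy, hD⟩, rfl⟩
        · exact ⟨⟨⟨hsub (hpxy ▸ hy), hsub (hpxy ▸ hx)⟩, Ne.symm hxy, hsymm _ _ hD⟩,
            by rw [Finset.pair_comm]⟩
    rw [hset, card_insert_of_notMem (by simp [Prod.ext_iff, hxy]), card_singleton]
  calc ∑ p ∈ U, (T.filter (fun q => ({q.1, q.2} : Finset α) = p)).card
      = ∑ _p ∈ U, 2 := Finset.sum_congr rfl hfib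
    _ = 2 * U.card := by rw [Finset.sum_const, smul_eq_mul, mul_comm]

lemma aux_factor {α β : Type*} [DecidableEq α] [DecidableEq β]
    (A : Finset α) (B : Finset β) (f : α → ℕ) (g : β → ℕ) (m : ℕ) :
    ((A ×ˢ B).filter (fun q => f q.1 + g q.2 = m)).card =
      ∑ u ∈ range (m + 1),
        (A.filter (fun a => f a = u)).card * (B.filter (fun b => g b = m - u)).card := by
  rw [card_eq_sum_card_fiberwise (f := fun q => f q.1) (t := range (m + 1))
    (by intro q hq; rw [mem_coe, mem_filter] at hq; rw [mem_coe, mem_range]; change f q.1 < m + 1; omega)]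
  refine Finset.sum_congr rfl fun u hu => ?_
  rw [mem_range] at hu
  rw [filter_filter]
  have : ((A ×ˢ B).filter fun q => (f q.1 + g q.2 = m) ∧ f q.1 = u)
      = (A ×ˢ B).filter fun q => f q.1 = u ∧ g q.2 = m - u := by
    apply filter_congr; intro q _; constructor <;> (intro h; omega)
  rw [this, filter_product (fun a => f a = u) (fun b => g b = m - u), card_product]

lemma aux_reindex (Lx Ly : ℕ) (P : ℕ → ℕ → ℕ → ℕ → Prop)
    [∀ a b c d, Decidable (P a b c d)] :
    (((Finset.range Lx ×ˢ Finset.range Ly) ×ˢ (Finset.range Lx ×ˢ Finset.range Ly)).filter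
        (fun q => P q.1.1 q.2.1 q.1.2 q.2.2)).card =
      (((range Lx ×ˢ range Lx) ×ˢ (range Ly ×ˢ range Ly)).filter
        (fun q => P q.1.1 q.1.2 q.2.1 q.2.2)).card := by
  apply Finset.card_nbij' (i := fun q => ((q.1.1, q.2.1), (q.1.2, q.2.2)))
    (j := fun q => ((q.1.1, q.2.1), (q.1.2, q.2.2)))
  · intro q hq
    simp only [mem_coe, mem_filter, mem_product, mem_range] at hq ⊢
    tauto
  · intro q hq
    simp only [mem_coe, mem_filter, mem_product, mem_range] at hq ⊢
    tauto
  · intro q _; rfl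
  · intro q _; rfl

lemma aux_count_shift (L d : ℕ) :
    ((range L ×ˢ range L).filter (fun q => q.2 = q.1 + d)).card = L - d := by
  rw [← Finset.card_range (L - d)]
  refine Finset.card_nbij' (fun q => q.1) (fun x => (x, x + d)) ?_ ?_ ?_ ?_
  · intro q hq
    simp only [mem_coe, mem_filter, mem_product, mem_range] at hq ⊢
    omega
  · intro x hx
    simp only [mem_coe, mem_filter, mem_product, mem_range, and_true] at hx ⊢
    omega
  · intro q hq
    simp only [mem_coe, mem_filter, mem_product, mem_range] at hq
    exact Prod.ext rfl hq.2.symm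
  · intro x _; rfl

lemma aux_count_shift' (L d : ℕ) :
    ((range L ×ˢ range L).filter (fun q => q.1 = q.2 + d)).card = L - d := by
  rw [← aux_count_shift L d]
  refine Finset.card_nbij' (fun q => (q.2, q.1)) (fun q => (q.2, q.1)) ?_ ?_
    (fun q _ => rfl) (fun q _ => rfl) <;>
    · intro q hq
      simp only [mem_coe, mem_filter, mem_product, mem_range] at hq ⊢
      tauto

lemma aux_count_dist_zero (L : ℕ) :
    ((range L ×ˢ range L).filter (fun q => Nat.dist q.1 q.2 = 0)).card = L := by
  have : ((range L ×ˢ range L).filter (fun q => Nat.dist q.1 q.2 = 0))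
      = ((range L ×ˢ range L).filter (fun q => q.2 = q.1 + 0)) := by
    apply filter_congr; intro q _
    simp only [Nat.dist]; omega
  rw [this, aux_count_shift]; omega

lemma aux_count_dist_pos (L d : ℕ) (hd : 0 < d) :
    ((range L ×ˢ range L).filter (fun q => Nat.dist q.1 q.2 = d)).card = 2 * (L - d) := by
  have hsplit : ((range L ×ˢ range L).filter (fun q => Nat.dist q.1 q.2 = d))
      = ((range L ×ˢ range L).filter (fun q => q.2 = q.1 + d)) ∪
        ((range L ×ˢ range L).filter (fun q => q.1 = q.2 + d)) := by
    rw [← filter_or]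
    apply filter_congr; intro q _
    simp only [Nat.dist]; omega
  rw [hsplit, card_union_of_disjoint, aux_count_shift, aux_count_shift']
  · omega
  · rw [Finset.disjoint_left]
    intro q h1 h2
    rw [mem_filter] at h1 h2
    omega

lemma aux_count_pdist_zero (L : ℕ) :
    ((range L ×ˢ range L).filter
      (fun q => min (Nat.dist q.1 q.2) (L - Nat.dist q.1 q.2) = 0)).card = L := by
  have : ((range L ×ˢ range L).filter
        (fun q => min (Nat.dist q.1 q.2) (L - Nat.dist q.1 q.2) = 0))
      = ((range L ×ˢ range L).filter (fun q => Nat.dist q.1 q.2 = 0)) := by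
    apply filter_congr; intro q hq
    simp only [mem_product, mem_range] at hq
    simp only [Nat.dist]; omega
  rw [this, aux_count_dist_zero]

lemma aux_count_pdist_pos (L d : ℕ) (hd : 0 < d) (hdL : 2 * d < L) :
    ((range L ×ˢ range L).filter
      (fun q => min (Nat.dist q.1 q.2) (L - Nat.dist q.1 q.2) = d)).card = 2 * L := by
  have hsplit : ((range L ×ˢ range L).filter
        (fun q => min (Nat.dist q.1 q.2) (L - Nat.dist q.1 q.2) = d))
      = ((range L ×ˢ range L).filter (fun q => Nat.dist q.1 q.2 = d)) ∪
        ((range L ×ˢ range L).filter (fun q => Nat.dist q.1 q.2 = L - d)) := by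
    rw [← filter_or]
    apply filter_congr; intro q hq
    simp only [mem_product, mem_range] at hq
    simp only [Nat.dist]; omega
  rw [hsplit, card_union_of_disjoint, aux_count_dist_pos L d hd,
    aux_count_dist_pos L (L - d) (by omega)]
  · omega
  · rw [Finset.disjoint_left]
    intro q h1 h2
    rw [mem_filter] at h1 h2
    omega

lemma aux_mid (X Y c : ℤ) (k : ℕ) :
    6 * ∑ i ∈ Finset.range k, (4*X*Y - 4*(X - ((i:ℤ)+1))*(Y - c + (i:ℤ))) =
      24*(k:ℤ)*(X*c + Y - c) + 12*(k:ℤ)*((k:ℤ)-1)*(-X + Y - c + 1)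
        + 4*(k:ℤ)*((k:ℤ)-1)*(2*(k:ℤ)-1) := by
  induction k with
  | zero => simp
  | succ n ih =>
    rw [Finset.sum_range_succ, mul_add]
    push_cast
    linear_combination ih



/-- The (non-periodic) taxicab distance between two lattice sites. -/
def taxicabDist (a b : ℕ × ℕ) : ℕ :=
  Nat.dist a.1 b.1 + Nat.dist a.2 b.2

/-- For `0 < m` with `2m < Lx` and `2m < Ly`, the remainder
`r₁(m) = s₁ᵖ(m) − s₁ⁿ(m)` between the periodic and non-periodic counts of unordered
pairs of distinct sites at taxicab distance `m` satisfies
`3 r₁(m) = 3 (Lx + Ly) m² − (m³ − m)`. -/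
theorem periodic_nonperiodic_taxicab_remainder (Lx Ly m : ℕ)
    (hLx : 0 < Lx) (hLy : 0 < Ly) (hm : 0 < m) (hmx : 2 * m < Lx) (hmy : 2 * m < Ly) :
    3 * (((((latticeSites Lx Ly).powersetCard 2).filter
        (fun p => ∃ a ∈ p, ∃ b ∈ p, a ≠ b ∧ periodicTaxicabDist Lx Ly a b = m)).card : ℤ)
      - ((((latticeSites Lx Ly).powersetCard 2).filter
        (fun p => ∃ a ∈ p, ∃ b ∈ p, a ≠ b ∧ taxicabDist a b = m)).card : ℤ))
      = 3 * (Lx + Ly) * m ^ 2 - (m ^ 3 - m) := by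
  obtain ⟨k, rfl⟩ : ∃ k, m = k + 1 := ⟨m - 1, by omega⟩
  set S := latticeSites Lx Ly with hS
  set sp := ((S.powersetCard 2).filter
      (fun p => ∃ a ∈ p, ∃ b ∈ p, a ≠ b ∧ periodicTaxicabDist Lx Ly a b = (k+1))).card with hsp
  set sn := ((S.powersetCard 2).filter
      (fun p => ∃ a ∈ p, ∃ b ∈ p, a ≠ b ∧ taxicabDist a b = (k+1))).card with hsn
  -- Step 1: ordered pair counts
  have hp2 : ((S ×ˢ S).filter
      (fun q => q.1 ≠ q.2 ∧ periodicTaxicabDist Lx Ly q.1 q.2 = (k+1))).card = 2 * sp :=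
    aux_two_mul_card S (fun a b => periodicTaxicabDist Lx Ly a b = (k+1))
      (fun a b h => by simpa only [periodicTaxicabDist, Nat.dist_comm] using h)
  have hn2 : ((S ×ˢ S).filter
      (fun q => q.1 ≠ q.2 ∧ taxicabDist q.1 q.2 = (k+1))).card = 2 * sn :=
    aux_two_mul_card S (fun a b => taxicabDist a b = (k+1))
      (fun a b h => by simpa only [taxicabDist, Nat.dist_comm] using h)
  -- Step 2: drop the ≠
  have hdropP : ((S ×ˢ S).filter
      (fun q => q.1 ≠ q.2 ∧ periodicTaxicabDist Lx Ly q.1 q.2 = (k+1)))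
      = ((S ×ˢ S).filter (fun q => periodicTaxicabDist Lx Ly q.1 q.2 = (k+1))) := by
    apply filter_congr; intro q _
    constructor
    · exact fun h => h.2
    · intro h
      refine ⟨fun hq => ?_, h⟩
      rw [hq] at h
      simp only [periodicTaxicabDist, Nat.dist_self, Nat.zero_min, Nat.sub_zero] at h
      omega
  have hdropN : ((S ×ˢ S).filter (fun q => q.1 ≠ q.2 ∧ taxicabDist q.1 q.2 = (k+1)))
      = ((S ×ˢ S).filter (fun q => taxicabDist q.1 q.2 = (k+1))) := by
    apply filter_congr; intro q _
    constructor
    · exact fun h => h.2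
    · intro h
      refine ⟨fun hq => ?_, h⟩
      rw [hq] at h
      simp only [taxicabDist, Nat.dist_self] at h
      omega
  -- Step 3: reindex and factor
  have hreP : ((S ×ˢ S).filter (fun q => periodicTaxicabDist Lx Ly q.1 q.2 = (k+1))).card
      = ∑ u ∈ range ((k+1) + 1),
        ((range Lx ×ˢ range Lx).filter
          (fun a => min (Nat.dist a.1 a.2) (Lx - Nat.dist a.1 a.2) = u)).card *
        ((range Ly ×ˢ range Ly).filter
          (fun b => min (Nat.dist b.1 b.2) (Ly - Nat.dist b.1 b.2) = (k+1) - u)).card := by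
    refine Eq.trans ?_ (aux_factor (range Lx ×ˢ range Lx) (range Ly ×ˢ range Ly)
      (fun a => min (Nat.dist a.1 a.2) (Lx - Nat.dist a.1 a.2))
      (fun b => min (Nat.dist b.1 b.2) (Ly - Nat.dist b.1 b.2)) (k+1))
    exact aux_reindex Lx Ly (fun a b c d =>
      min (Nat.dist a b) (Lx - Nat.dist a b) + min (Nat.dist c d) (Ly - Nat.dist c d) = (k+1))
  have hreN : ((S ×ˢ S).filter (fun q => taxicabDist q.1 q.2 = (k+1))).card
      = ∑ u ∈ range ((k+1) + 1),
        ((range Lx ×ˢ range Lx).filter (fun a => Nat.dist a.1 a.2 = u)).card *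
        ((range Ly ×ˢ range Ly).filter (fun b => Nat.dist b.1 b.2 = (k+1) - u)).card := by
    refine Eq.trans ?_ (aux_factor (range Lx ×ˢ range Lx) (range Ly ×ˢ range Ly)
      (fun a => Nat.dist a.1 a.2) (fun b => Nat.dist b.1 b.2) (k+1))
    exact aux_reindex Lx Ly (fun a b c d => Nat.dist a b + Nat.dist c d = (k+1))
  -- Step 4: evaluate each coordinate count
  have h2sp : 2 * sp = ∑ u ∈ range ((k+1) + 1),
      (if u = 0 then Lx else 2 * Lx) * (if u = k + 1 then Ly else 2 * Ly) := by
    rw [← hp2, hdropP, hreP]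
    refine Finset.sum_congr rfl fun u hu => ?_
    rw [mem_range] at hu
    by_cases hu0 : u = 0
    · rw [if_pos hu0, if_neg (show ¬ u = k + 1 by omega), hu0,
        aux_count_pdist_zero, aux_count_pdist_pos Ly (k + 1 - 0) (by omega) (by omega)]
    · by_cases huk : u = k + 1
      · rw [if_neg hu0, if_pos huk, aux_count_pdist_pos Lx u (by omega) (by omega),
          huk, Nat.sub_self, aux_count_pdist_zero]
      · rw [if_neg hu0, if_neg huk, aux_count_pdist_pos Lx u (by omega) (by omega),
          aux_count_pdist_pos Ly (k + 1 - u) (by omega) (by omega)]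
  have h2sn : 2 * sn = ∑ u ∈ range ((k+1) + 1),
      (if u = 0 then Lx else 2 * (Lx - u)) *
        (if u = k + 1 then Ly else 2 * (Ly - (k + 1 - u))) := by
    rw [← hn2, hdropN, hreN]
    refine Finset.sum_congr rfl fun u hu => ?_
    rw [mem_range] at hu
    by_cases hu0 : u = 0
    · rw [if_pos hu0, if_neg (show ¬ u = k + 1 by omega), hu0,
        aux_count_dist_zero, aux_count_dist_pos Ly (k + 1 - 0) (by omega)]
    · by_cases huk : u = k + 1
      · rw [if_neg hu0, if_pos huk, aux_count_dist_pos Lx u (by omega),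
          huk, Nat.sub_self, aux_count_dist_zero]
      · rw [if_neg hu0, if_neg huk, aux_count_dist_pos Lx u (by omega),
          aux_count_dist_pos Ly (k + 1 - u) (by omega)]
  -- Step 5: cast to ℤ
  set TZ : ℕ → ℤ := fun u =>
    (if u = 0 then (Lx:ℤ) else 2*(Lx:ℤ)) * (if u = k + 1 then (Ly:ℤ) else 2*(Ly:ℤ)) -
    (if u = 0 then (Lx:ℤ) else 2*((Lx:ℤ) - (u:ℤ))) *
      (if u = k + 1 then (Ly:ℤ) else 2*((Ly:ℤ) - (((k:ℤ) + 1) - (u:ℤ)))) with hTZ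
  have hcast : ((2 * sp : ℕ) : ℤ) - ((2 * sn : ℕ) : ℤ) = ∑ u ∈ range ((k+1) + 1), TZ u := by
    rw [h2sp, h2sn, Nat.cast_sum, Nat.cast_sum, ← Finset.sum_sub_distrib]
    refine Finset.sum_congr rfl fun u hu => ?_
    rw [mem_range] at hu
    have c1 : u ≤ Lx := by omega
    have c2 : u ≤ k + 1 := by omega
    simp only [hTZ]
    by_cases hu0 : u = 0
    · have huk : ¬ u = k + 1 := by omega
      have c3 : k + 1 - u ≤ Ly := by omega
      simp only [if_pos hu0, if_neg huk]
      push_cast [Nat.cast_sub c3, Nat.cast_sub c2]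
      ring
    · by_cases huk : u = k + 1
      · simp only [if_neg hu0, if_pos huk]
        push_cast [Nat.cast_sub c1]
        try rw [huk]
        try ring
      · have c3 : k + 1 - u ≤ Ly := by omega
        simp only [if_neg hu0, if_neg huk]
        push_cast [Nat.cast_sub c1, Nat.cast_sub c3, Nat.cast_sub c2]
        ring
  -- Step 6: peel the sum
  have hpeel : ∑ u ∈ range ((k+1) + 1), TZ u
      = ∑ i ∈ range k, TZ (i + 1) + TZ (k + 1) + TZ 0 := by
    rw [Finset.sum_range_succ' TZ (k + 1), Finset.sum_range_succ]
  have hterm : ∑ i ∈ range k, TZ (i + 1)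
      = ∑ i ∈ range k,
        (4*(Lx:ℤ)*(Ly:ℤ) - 4*((Lx:ℤ) - ((i:ℤ)+1))*((Ly:ℤ) - (k:ℤ) + (i:ℤ))) := by
    refine Finset.sum_congr rfl fun i hi => ?_
    rw [mem_range] at hi
    have h1 : ¬ (i + 1 = 0) := by omega
    have h2 : ¬ (i + 1 = k + 1) := by omega
    simp only [hTZ, if_neg h1, if_neg h2]
    push_cast
    ring
  have hT0 : TZ 0 = 2*(Lx:ℤ)*((k:ℤ)+1) := by
    have h2 : ¬ ((0:ℕ) = k + 1) := by omega
    simp only [hTZ, if_pos rfl, if_neg h2]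
    push_cast
    ring
  have hTm : TZ (k + 1) = 2*(Ly:ℤ)*((k:ℤ)+1) := by
    have h1 : ¬ (k + 1 = 0) := by omega
    simp only [hTZ, if_neg h1, if_pos rfl]
    push_cast
    ring
  -- Step 7: finish
  have hmain : (12:ℤ) * (3 * ((sp:ℤ) - (sn:ℤ)))
      = 12 * (3 * ((Lx:ℤ) + (Ly:ℤ)) * ((k:ℤ)+1) ^ 2 - (((k:ℤ)+1) ^ 3 - ((k:ℤ)+1))) := by
    have e1 : (12:ℤ) * (3 * ((sp:ℤ) - (sn:ℤ)))
        = 18 * (((2 * sp : ℕ) : ℤ) - ((2 * sn : ℕ) : ℤ)) := by push_cast; ring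
    rw [e1, hcast, hpeel, hterm, hT0, hTm]
    have hmid := aux_mid (Lx:ℤ) (Ly:ℤ) (k:ℤ) k
    linear_combination 3 * hmid
  have h := mul_left_cancel₀ (show (12:ℤ) ≠ 0 by norm_num) hmain
  push_cast at h ⊢
  linear_combination h
end

section
/- Let Lx, Ly, Lz and m be positive integers with 2m < Lx, 2m < Ly and 2m < Lz. Then the number of unordered pairs {a, b} of distinct sites of the Lx × Ly × Lz cuboidal lattice whose periodic taxicab distance equals m is exactly (2m² + 1)·Lx·Ly·Lz. -/
/-- The site set of the `Lx × Ly × Lz` cuboidal lattice. -/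
def cubeSites (Lx Ly Lz : ℕ) : Finset (ℕ × ℕ × ℕ) :=
  Finset.range Lx ×ˢ (Finset.range Ly ×ˢ Finset.range Lz)

/-- The taxicab distance under periodic boundary conditions on an
`Lx × Ly × Lz` cuboidal lattice. -/
def periodicTaxicabDist3 (Lx Ly Lz : ℕ) (a b : ℕ × ℕ × ℕ) : ℕ :=
  min (Nat.dist a.1 b.1) (Lx - Nat.dist a.1 b.1) +
    min (Nat.dist a.2.1 b.2.1) (Ly - Nat.dist a.2.1 b.2.1) +
    min (Nat.dist a.2.2 b.2.2) (Lz - Nat.dist a.2.2 b.2.2)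

lemma keySum (L m : ℕ) (h : 2 * m < L) (G : ℕ → ℕ) (hG : ∀ t, m < t → G t = 0) :
    ∑ x ∈ Finset.range L, G (min x (L - x)) = G 0 + 2 * ∑ k ∈ Finset.Icc 1 m, G k := by
  have h1 : Finset.range L = Finset.range (m+1) ∪ Finset.Ico (m+1) (L-m) ∪ Finset.Ico (L-m) L := by
    ext x; simp [Finset.mem_range, Finset.mem_Ico, Finset.mem_union]; omega
  rw [h1, Finset.sum_union, Finset.sum_union]
  · have e1 : ∑ x ∈ Finset.range (m+1), G (min x (L - x)) = G 0 + ∑ k ∈ Finset.Icc 1 m, G k := by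
      have : Finset.range (m+1) = insert 0 (Finset.Icc 1 m) := by
        ext x; simp; omega
      rw [this, Finset.sum_insert (by simp)]
      rw [show min 0 (L - 0) = 0 by omega]
      congr 1
      apply Finset.sum_congr rfl
      intro k hk
      simp only [Finset.mem_Icc] at hk
      congr 1; omega
    have e2 : ∑ x ∈ Finset.Ico (m+1) (L-m), G (min x (L - x)) = 0 := by
      apply Finset.sum_eq_zero
      intro x hx
      simp only [Finset.mem_Ico] at hx
      apply hG; omega
    have e3 : ∑ x ∈ Finset.Ico (L-m) L, G (min x (L - x)) = ∑ k ∈ Finset.Icc 1 m, G k := by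
      apply Finset.sum_nbij' (fun x => L - x) (fun k => L - k)
      · intro x hx; simp only [Finset.mem_Ico] at hx; simp only [Finset.mem_Icc]; omega
      · intro k hk; simp only [Finset.mem_Icc] at hk; simp only [Finset.mem_Ico]; omega
      · intro x hx; simp only [Finset.mem_Ico] at hx; omega
      · intro k hk; simp only [Finset.mem_Icc] at hk; omega
      · intro x hx; simp only [Finset.mem_Ico] at hx; congr 1; omega
    rw [e1, e2, e3]; ring
  · simp only [Finset.disjoint_left, Finset.mem_Ico, Finset.mem_range]; omega
  · simp only [Finset.disjoint_left, Finset.mem_union, Finset.mem_Ico, Finset.mem_range]; omega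

lemma count2 (Ly Lz j m : ℕ) (hj : j ≤ m) (hy : 2 * m < Ly) (hz : 2 * m < Lz) :
    ∑ y ∈ Finset.range Ly, ∑ z ∈ Finset.range Lz,
      (if min y (Ly - y) + min z (Lz - z) = j then 1 else 0)
      = if j = 0 then 1 else 4 * j := by
  have c1 : ∀ t, ∑ z ∈ Finset.range Lz, (if t + min z (Lz - z) = j then 1 else 0)
      = if t ≤ j then (if j - t = 0 then 1 else 2) else 0 := by
    intro t
    rcases le_or_gt t j with ht | ht
    · rw [keySum Lz m hz (fun s => if t + s = j then 1 else 0) (fun s hs => by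
        simp only [ite_eq_right_iff]; intro he; omega)]
      simp only [if_pos ht]
      rcases Nat.eq_or_lt_of_le ht with he | hlt
      · -- t = j : term at 0 is 1, Icc terms all 0
        have : ∀ k ∈ Finset.Icc 1 m, (if t + k = j then 1 else 0) = 0 := by
          intro k hk; simp only [Finset.mem_Icc] at hk; simp only [ite_eq_right_iff]; omega
        subst he
        rw [Finset.sum_congr rfl this]
        simp
      · -- t < j : term at 0 is 0; exactly one k = j - t in Icc 1 m
        have h0 : (if t + 0 = j then 1 else 0) = 0 := by simp; omega
        rw [h0]
        have : ∑ k ∈ Finset.Icc 1 m, (if t + k = j then 1 else 0)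
            = ∑ k ∈ Finset.Icc 1 m, (if k = j - t then 1 else 0) := by
          apply Finset.sum_congr rfl; intro k hk
          congr 1; simp only [eq_iff_iff]; omega
        rw [this, Finset.sum_ite_eq' (Finset.Icc 1 m) (j - t) (fun _ => 1)]
        have : j - t ∈ Finset.Icc 1 m := by simp only [Finset.mem_Icc]; omega
        rw [if_pos this]
        rw [if_neg (by omega)]
    · rw [if_neg (by omega)]
      apply Finset.sum_eq_zero; intro z _
      simp only [ite_eq_right_iff]; intro he; omega
  rw [keySum Ly m hy (fun t => ∑ z ∈ Finset.range Lz,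
        (if t + min z (Lz - z) = j then 1 else 0))
      (fun t ht => by rw [c1 t, if_neg (by omega)])]
  simp only [c1]
  rcases Nat.eq_zero_or_pos j with hj0 | hj0
  · subst hj0
    have hz0 : ∀ k ∈ Finset.Icc 1 m, (if k ≤ 0 then (if 0 - k = 0 then 1 else 2) else 0) = 0 := by
      intro k hk; simp only [Finset.mem_Icc] at hk; rw [if_neg (by omega)]
    rw [Finset.sum_congr rfl hz0]
    simp
  · rw [if_pos (Nat.zero_le j), if_neg (by omega), if_neg (by omega)]
    have hsplit : Finset.Icc 1 m = Finset.Icc 1 j ∪ Finset.Icc (j+1) m := by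
      ext k; simp only [Finset.mem_Icc, Finset.mem_union]; omega
    rw [hsplit, Finset.sum_union (by
      simp only [Finset.disjoint_left, Finset.mem_Icc]; omega)]
    have h2 : ∑ k ∈ Finset.Icc (j+1) m, (if k ≤ j then (if j - k = 0 then 1 else 2) else 0) = 0 := by
      apply Finset.sum_eq_zero; intro k hk; simp only [Finset.mem_Icc] at hk
      rw [if_neg (by omega)]
    have h1 : Finset.Icc 1 j = insert j (Finset.Icc 1 (j-1)) := by
      ext k; simp only [Finset.mem_Icc, Finset.mem_insert]; omega
    rw [h2, h1, Finset.sum_insert (by simp only [Finset.mem_Icc]; omega)]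
    rw [if_pos le_rfl, if_pos (by omega)]
    have h3 : ∀ k ∈ Finset.Icc 1 (j-1), (if k ≤ j then (if j - k = 0 then 1 else 2) else 0) = 2 := by
      intro k hk; simp only [Finset.mem_Icc] at hk
      rw [if_pos (by omega), if_neg (by omega)]
    rw [Finset.sum_congr rfl h3, Finset.sum_const, Nat.card_Icc, smul_eq_mul]
    omega

lemma count3 (Lx Ly Lz m : ℕ) (hm : 0 < m) (hx : 2 * m < Lx) (hy : 2 * m < Ly)
    (hz : 2 * m < Lz) :
    ∑ x ∈ Finset.range Lx, ∑ y ∈ Finset.range Ly, ∑ z ∈ Finset.range Lz,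
      (if min x (Lx - x) + min y (Ly - y) + min z (Lz - z) = m then 1 else 0)
      = 4 * m ^ 2 + 2 := by
  have key : ∀ t, t ≤ m → (∑ y ∈ Finset.range Ly, ∑ z ∈ Finset.range Lz,
      (if t + (min y (Ly - y) + min z (Lz - z)) = m then 1 else 0))
      = if m - t = 0 then 1 else 4 * (m - t) := by
    intro t ht
    rw [← count2 Ly Lz (m - t) m (by omega) hy hz]
    apply Finset.sum_congr rfl; intro y _
    apply Finset.sum_congr rfl; intro z _
    congr 1; simp only [eq_iff_iff]; omega
  have hGform : ∀ x, (∑ y ∈ Finset.range Ly, ∑ z ∈ Finset.range Lz,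
      (if min x (Lx - x) + min y (Ly - y) + min z (Lz - z) = m then 1 else 0))
      = (fun t => ∑ y ∈ Finset.range Ly, ∑ z ∈ Finset.range Lz,
      (if t + (min y (Ly - y) + min z (Lz - z)) = m then 1 else 0)) (min x (Lx - x)) := by
    intro x; simp only
    apply Finset.sum_congr rfl; intro y _
    apply Finset.sum_congr rfl; intro z _
    congr 1; simp only [eq_iff_iff]; omega
  rw [Finset.sum_congr rfl (fun x _ => hGform x)]
  rw [keySum Lx m hx (fun t => ∑ y ∈ Finset.range Ly, ∑ z ∈ Finset.range Lz,
      (if t + (min y (Ly - y) + min z (Lz - z)) = m then 1 else 0)) (fun t ht => by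
    apply Finset.sum_eq_zero; intro y _
    apply Finset.sum_eq_zero; intro z _
    simp only [ite_eq_right_iff]; intro he; omega)]
  rw [key 0 (by omega)]
  rw [Finset.sum_congr rfl (fun k hk => key k (by
    simp only [Finset.mem_Icc] at hk; omega))]
  rw [if_neg (by omega)]
  -- now: 4 * (m - 0) + 2 * ∑ k ∈ Icc 1 m, (if m - k = 0 then 1 else 4 * (m-k)) = 4m²+2
  obtain ⟨n, rfl⟩ : ∃ n, m = n + 1 := ⟨m - 1, by omega⟩
  have hsplit : Finset.Icc 1 (n+1) = insert (n+1) (Finset.Icc 1 n) := by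
    ext k; simp only [Finset.mem_Icc, Finset.mem_insert]; omega
  rw [hsplit, Finset.sum_insert (by simp only [Finset.mem_Icc]; omega)]
  rw [if_pos (by omega)]
  have hterm : ∀ k ∈ Finset.Icc 1 n, (if n + 1 - k = 0 then 1 else 4 * (n + 1 - k))
      = 4 * (n + 1 - k) := by
    intro k hk; simp only [Finset.mem_Icc] at hk; rw [if_neg (by omega)]
  rw [Finset.sum_congr rfl hterm]
  have hrev : ∑ k ∈ Finset.Icc 1 n, 4 * (n + 1 - k) = ∑ k ∈ Finset.Icc 1 n, 4 * k := by
    apply Finset.sum_nbij' (fun k => n + 1 - k) (fun k => n + 1 - k) <;>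
      (intro k hk; simp only [Finset.mem_Icc] at hk ⊢) <;>
      first
        | omega
        | (congr 1; omega)
  rw [hrev, ← Finset.mul_sum]
  have hgauss : (∑ k ∈ Finset.Icc 1 n, k) * 2 = (n + 1) * n := by
    have h1 : Finset.range (n+1) = insert 0 (Finset.Icc 1 n) := by
      ext k; simp only [Finset.mem_range, Finset.mem_insert, Finset.mem_Icc]; omega
    have := Finset.sum_range_id_mul_two (n+1)
    rw [h1, Finset.sum_insert (by simp only [Finset.mem_Icc]; omega)] at this
    simpa using this
  rw [Nat.sub_zero]
  have hring : (4:ℕ) * (n + 1) ^ 2 + 2 = 4 * ((n + 1) * n) + 4 * n + 6 := by ring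
  rw [hring, ← hgauss]
  ring

lemma transl (L a : ℕ) (ha : a < L) (h : ℕ → ℕ) :
    ∑ b ∈ Finset.range L, h (min (Nat.dist a b) (L - Nat.dist a b))
      = ∑ c ∈ Finset.range L, h (min c (L - c)) := by
  have hL : 0 < L := Nat.pos_of_ne_zero (by omega)
  apply Finset.sum_nbij' (fun b => (b + (L - a)) % L) (fun c => (c + a) % L)
  · intro b _; simp only [Finset.mem_range]; exact Nat.mod_lt _ hL
  · intro c _; simp only [Finset.mem_range]; exact Nat.mod_lt _ hL
  · intro b hb; simp only [Finset.mem_range] at hb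
    rw [Nat.mod_add_mod]
    have : b + (L - a) + a = b + L := by omega
    rw [this, Nat.add_mod_right, Nat.mod_eq_of_lt hb]
  · intro c hc; simp only [Finset.mem_range] at hc
    rw [Nat.mod_add_mod]
    have : c + a + (L - a) = c + L := by omega
    rw [this, Nat.add_mod_right, Nat.mod_eq_of_lt hc]
  · intro b hb; simp only [Finset.mem_range] at hb
    congr 1
    have hd : Nat.dist a b = if a ≤ b then b - a else a - b := by
      rcases le_or_gt a b with hab | hab
      · rw [if_pos hab, Nat.dist_eq_sub_of_le hab]
      · rw [if_neg (by omega), Nat.dist_eq_sub_of_le_right (by omega)]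
    have hc : (b + (L - a)) % L = if a ≤ b then b - a else L - (a - b) := by
      rcases le_or_gt a b with hab | hab
      · rw [if_pos hab]
        have : b + (L - a) = (b - a) + L := by omega
        rw [this, Nat.add_mod_right, Nat.mod_eq_of_lt (by omega)]
      · rw [if_neg (by omega)]
        have : b + (L - a) = L - (a - b) := by omega
        rw [this, Nat.mod_eq_of_lt (by omega)]
    rw [hd] at *
    rw [hc]
    rcases le_or_gt a b with hab | hab
    · rw [if_pos hab, if_pos hab]
    · rw [if_neg (by omega), if_neg (by omega)]
      omega

lemma orderedCount (Lx Ly Lz m : ℕ) (hm : 0 < m) (hx : 2 * m < Lx) (hy : 2 * m < Ly)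
    (hz : 2 * m < Lz) :
    ((cubeSites Lx Ly Lz ×ˢ cubeSites Lx Ly Lz).filter
      (fun p => p.1 ≠ p.2 ∧ periodicTaxicabDist3 Lx Ly Lz p.1 p.2 = m)).card
      = (4 * m ^ 2 + 2) * (Lx * (Ly * Lz)) := by
  rw [Finset.card_filter]
  simp only [cubeSites, Finset.sum_product, periodicTaxicabDist3]
  have inner : ∀ a1 a2 a3, a1 < Lx → a2 < Ly → a3 < Lz →
      (∑ b1 ∈ Finset.range Lx, ∑ b2 ∈ Finset.range Ly, ∑ b3 ∈ Finset.range Lz,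
        if ((a1, a2, a3) : ℕ × ℕ × ℕ) ≠ (b1, b2, b3) ∧
            min (Nat.dist a1 b1) (Lx - Nat.dist a1 b1) +
            min (Nat.dist a2 b2) (Ly - Nat.dist a2 b2) +
            min (Nat.dist a3 b3) (Lz - Nat.dist a3 b3) = m then 1 else 0)
      = 4 * m ^ 2 + 2 := by
    intro a1 a2 a3 ha1 ha2 ha3
    have drop : ∀ b1 b2 b3 : ℕ,
        (if ((a1, a2, a3) : ℕ × ℕ × ℕ) ≠ (b1, b2, b3) ∧
            min (Nat.dist a1 b1) (Lx - Nat.dist a1 b1) +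
            min (Nat.dist a2 b2) (Ly - Nat.dist a2 b2) +
            min (Nat.dist a3 b3) (Lz - Nat.dist a3 b3) = m then 1 else 0)
        = (if min (Nat.dist a1 b1) (Lx - Nat.dist a1 b1) +
            min (Nat.dist a2 b2) (Ly - Nat.dist a2 b2) +
            min (Nat.dist a3 b3) (Lz - Nat.dist a3 b3) = m then (1:ℕ) else 0) := by
      intro b1 b2 b3
      congr 1
      simp only [eq_iff_iff]
      constructor
      · exact fun h => h.2
      · intro h
        refine ⟨?_, h⟩
        intro he
        rw [Prod.mk.injEq, Prod.mk.injEq] at he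
        obtain ⟨e1, e2, e3⟩ := he
        subst e1; subst e2; subst e3
        simp [Nat.dist_self] at h
        omega
    simp only [drop]
    calc
      (∑ b1 ∈ Finset.range Lx, ∑ b2 ∈ Finset.range Ly, ∑ b3 ∈ Finset.range Lz,
        if min (Nat.dist a1 b1) (Lx - Nat.dist a1 b1) +
            min (Nat.dist a2 b2) (Ly - Nat.dist a2 b2) +
            min (Nat.dist a3 b3) (Lz - Nat.dist a3 b3) = m then (1:ℕ) else 0)
          = ∑ b1 ∈ Finset.range Lx, ∑ b2 ∈ Finset.range Ly, ∑ c3 ∈ Finset.range Lz,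
            if min (Nat.dist a1 b1) (Lx - Nat.dist a1 b1) +
              min (Nat.dist a2 b2) (Ly - Nat.dist a2 b2) +
              min c3 (Lz - c3) = m then (1:ℕ) else 0 := by
        refine Finset.sum_congr rfl fun b1 _ => Finset.sum_congr rfl fun b2 _ => ?_
        exact transl Lz a3 ha3 (fun t => if min (Nat.dist a1 b1) (Lx - Nat.dist a1 b1) +
          min (Nat.dist a2 b2) (Ly - Nat.dist a2 b2) + t = m then 1 else 0)
      _ = ∑ b1 ∈ Finset.range Lx, ∑ c2 ∈ Finset.range Ly, ∑ c3 ∈ Finset.range Lz,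
            if min (Nat.dist a1 b1) (Lx - Nat.dist a1 b1) +
              min c2 (Ly - c2) + min c3 (Lz - c3) = m then (1:ℕ) else 0 := by
        refine Finset.sum_congr rfl fun b1 _ => ?_
        exact transl Ly a2 ha2 (fun t => ∑ c3 ∈ Finset.range Lz,
          if min (Nat.dist a1 b1) (Lx - Nat.dist a1 b1) + t + min c3 (Lz - c3) = m
          then 1 else 0)
      _ = ∑ c1 ∈ Finset.range Lx, ∑ c2 ∈ Finset.range Ly, ∑ c3 ∈ Finset.range Lz,
            if min c1 (Lx - c1) + min c2 (Ly - c2) + min c3 (Lz - c3) = m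
            then (1:ℕ) else 0 :=
        transl Lx a1 ha1 (fun t => ∑ c2 ∈ Finset.range Ly, ∑ c3 ∈ Finset.range Lz,
          if t + min c2 (Ly - c2) + min c3 (Lz - c3) = m then 1 else 0)
      _ = 4 * m ^ 2 + 2 := count3 Lx Ly Lz m hm hx hy hz
  calc
    (∑ a1 ∈ Finset.range Lx, ∑ a2 ∈ Finset.range Ly, ∑ a3 ∈ Finset.range Lz,
      ∑ b1 ∈ Finset.range Lx, ∑ b2 ∈ Finset.range Ly, ∑ b3 ∈ Finset.range Lz,
        if ((a1, a2, a3) : ℕ × ℕ × ℕ) ≠ (b1, b2, b3) ∧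
            min (Nat.dist a1 b1) (Lx - Nat.dist a1 b1) +
            min (Nat.dist a2 b2) (Ly - Nat.dist a2 b2) +
            min (Nat.dist a3 b3) (Lz - Nat.dist a3 b3) = m then 1 else 0)
      = ∑ a1 ∈ Finset.range Lx, ∑ a2 ∈ Finset.range Ly, ∑ a3 ∈ Finset.range Lz,
          (4 * m ^ 2 + 2) := by
      refine Finset.sum_congr rfl fun a1 h1 => Finset.sum_congr rfl fun a2 h2 =>
        Finset.sum_congr rfl fun a3 h3 => ?_
      simp only [Finset.mem_range] at h1 h2 h3
      exact inner a1 a2 a3 h1 h2 h3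
    _ = (4 * m ^ 2 + 2) * (Lx * (Ly * Lz)) := by
      simp [Finset.sum_const, Finset.card_range]
      ring

lemma distSymm (Lx Ly Lz : ℕ) (a b : ℕ × ℕ × ℕ) :
    periodicTaxicabDist3 Lx Ly Lz a b = periodicTaxicabDist3 Lx Ly Lz b a := by
  simp [periodicTaxicabDist3, Nat.dist_comm]


/-- For `0 < m` with `2m < Lx`, `2m < Ly`, `2m < Lz`, the number of unordered pairs of
distinct sites of the `Lx × Ly × Lz` cuboidal lattice at periodic taxicab distance
exactly `m` is `(2 m² + 1) Lx Ly Lz`. -/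
theorem periodic_taxicab_pair_count_3d (Lx Ly Lz m : ℕ)
    (hLx : 0 < Lx) (hLy : 0 < Ly) (hLz : 0 < Lz) (hm : 0 < m)
    (hmx : 2 * m < Lx) (hmy : 2 * m < Ly) (hmz : 2 * m < Lz) :
    (((cubeSites Lx Ly Lz).powersetCard 2).filter
      (fun p => ∃ a ∈ p, ∃ b ∈ p, a ≠ b ∧ periodicTaxicabDist3 Lx Ly Lz a b = m)).card
      = (2 * m ^ 2 + 1) * Lx * Ly * Lz := by
  set S := cubeSites Lx Ly Lz with hS
  set P := (S.powersetCard 2).filter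
      (fun p => ∃ a ∈ p, ∃ b ∈ p, a ≠ b ∧ periodicTaxicabDist3 Lx Ly Lz a b = m) with hP
  set T := (S ×ˢ S).filter
      (fun p => p.1 ≠ p.2 ∧ periodicTaxicabDist3 Lx Ly Lz p.1 p.2 = m) with hT
  have hmap : ∀ x ∈ T, ({x.1, x.2} : Finset (ℕ × ℕ × ℕ)) ∈ P := by
    intro x hx
    rw [hT, Finset.mem_filter, Finset.mem_product] at hx
    obtain ⟨⟨h1, h2⟩, hne, hd⟩ := hx
    rw [hP, Finset.mem_filter, Finset.mem_powersetCard]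
    refine ⟨⟨?_, ?_⟩, x.1, by simp, x.2, by simp, hne, hd⟩
    · intro y hy
      simp only [Finset.mem_insert, Finset.mem_singleton] at hy
      rcases hy with rfl | rfl <;> assumption
    · rw [Finset.card_pair hne]
  have hcard : T.card = ∑ p ∈ P, (T.filter (fun x => ({x.1, x.2} : Finset (ℕ × ℕ × ℕ)) = p)).card :=
    Finset.card_eq_sum_card_fiberwise hmap
  have hfiber : ∀ p ∈ P, (T.filter (fun x => ({x.1, x.2} : Finset (ℕ × ℕ × ℕ)) = p)).card = 2 := by
    intro p hp
    rw [hP, Finset.mem_filter, Finset.mem_powersetCard] at hp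
    obtain ⟨⟨hsub, hcard2⟩, a', ha', b', hb', hne', hd'⟩ := hp
    obtain ⟨a, b, hab, rfl⟩ := Finset.card_eq_two.mp hcard2
    -- identify the witnesses with a, b
    have hda : periodicTaxicabDist3 Lx Ly Lz a b = m := by
      simp only [Finset.mem_insert, Finset.mem_singleton] at ha' hb'
      rcases ha' with rfl | rfl <;> rcases hb' with rfl | rfl
      · exact absurd rfl hne'
      · exact hd'
      · rw [distSymm]; exact hd'
      · exact absurd rfl hne'
    have haS : a ∈ S := hsub (by simp)
    have hbS : b ∈ S := hsub (by simp)
    have : T.filter (fun x => ({x.1, x.2} : Finset (ℕ × ℕ × ℕ)) = {a, b})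
        = {(a, b), (b, a)} := by
      ext x
      simp only [Finset.mem_filter, Finset.mem_insert, Finset.mem_singleton]
      constructor
      · rintro ⟨hxT, hxp⟩
        rw [hT, Finset.mem_filter] at hxT
        obtain ⟨_, hne, _⟩ := hxT
        have hx1 : x.1 ∈ ({a, b} : Finset (ℕ × ℕ × ℕ)) := by rw [← hxp]; simp
        have hx2 : x.2 ∈ ({a, b} : Finset (ℕ × ℕ × ℕ)) := by rw [← hxp]; simp
        simp only [Finset.mem_insert, Finset.mem_singleton] at hx1 hx2
        rcases hx1 with h1 | h1 <;> rcases hx2 with h2 | h2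
        · exact absurd (h1.trans h2.symm) hne
        · left; rw [← h1, ← h2]
        · right; rw [← h1, ← h2]
        · exact absurd (h1.trans h2.symm) hne
      · rintro (rfl | rfl)
        · refine ⟨?_, rfl⟩
          rw [hT, Finset.mem_filter, Finset.mem_product]
          exact ⟨⟨haS, hbS⟩, hab, hda⟩
        · refine ⟨?_, Finset.pair_comm b a⟩
          rw [hT, Finset.mem_filter, Finset.mem_product]
          exact ⟨⟨hbS, haS⟩, Ne.symm hab, by rw [distSymm]; exact hda⟩
    rw [this]
    rw [Finset.card_insert_of_notMem (by
      simp only [Finset.mem_singleton, Prod.mk.injEq, not_and]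
      intro h; exact absurd h hab), Finset.card_singleton]
  have hsum : T.card = 2 * P.card := by
    rw [hcard, Finset.sum_congr rfl hfiber, Finset.sum_const, smul_eq_mul, mul_comm]
  have hTc : T.card = (4 * m ^ 2 + 2) * (Lx * (Ly * Lz)) :=
    orderedCount Lx Ly Lz m hm hmx hmy hmz
  have h2 : 2 * P.card = 2 * ((2 * m ^ 2 + 1) * Lx * Ly * Lz) := by
    rw [← hsum, hTc]; ring
  exact Nat.eq_of_mul_eq_mul_left (by norm_num) h2
end

section
/- Let G_tri be the simple graph on vertex set ℤ × ℤ in which a vertex (x, y) is adjacent to (x−1, y) and (x+1, y), and additionally adjacent to (x, y−1) if x + y is even and to (x, y+1) if x + y is odd. Then for every integer m ≥ 1, the set of vertices at graph distance exactly m from the origin (0,0) is finite and has cardinality exactly 3m. -/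
/-- The neighbour relation of a triangular tessellation on `ℤ × ℤ`: site `(x, y)` (an
upward triangle when `x + y` is even, downward when odd) is related to `(x−1, y)` and
`(x+1, y)`, and to `(x, y−1)` if `x + y` is even, or to `(x, y+1)` if `x + y` is odd. -/
def triRel (a b : ℤ × ℤ) : Prop :=
  b = (a.1 - 1, a.2) ∨ b = (a.1 + 1, a.2) ∨
    (Even (a.1 + a.2) ∧ b = (a.1, a.2 - 1)) ∨ (¬ Even (a.1 + a.2) ∧ b = (a.1, a.2 + 1))

/-- The graph of the triangular tessellation. -/
def triGraph : SimpleGraph (ℤ × ℤ) :=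
  SimpleGraph.fromRel triRel

/-- Candidate distance function. -/
def triD (b : ℤ × ℤ) : ℕ :=
  max (b.1.natAbs + b.2.natAbs) (2 * b.2 + (b.1 + b.2) % 2).natAbs

lemma triD_eq (x y : ℤ) :
    triD (x, y) = max (x.natAbs + y.natAbs) (2 * y + (x + y) % 2).natAbs := rfl

lemma triRel_symm {a b : ℤ × ℤ} (h : triRel a b) : triRel b a := by
  obtain ⟨x, y⟩ := a
  rw [triRel] at h ⊢
  rw [Int.even_iff] at h ⊢
  rcases h with h | h | ⟨hp, h⟩ | ⟨hp, h⟩ <;> subst h <;> simp [Prod.ext_iff] <;> omega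

lemma triRel_ne {a b : ℤ × ℤ} (h : triRel a b) : a ≠ b := by
  obtain ⟨x, y⟩ := a
  rcases h with h | h | ⟨hp, h⟩ | ⟨hp, h⟩ <;> subst h <;> simp [Prod.ext_iff] <;> omega

lemma triGraph_adj_iff {a b : ℤ × ℤ} : triGraph.Adj a b ↔ triRel a b := by
  constructor
  · rintro ⟨hne, h | h⟩
    · exact h
    · exact triRel_symm h
  · intro h
    exact ⟨(triRel_ne h).symm ∘ Eq.symm, Or.inl h⟩

lemma triD_step {a b : ℤ × ℤ} (h : triRel a b) : triD b ≤ triD a + 1 := by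
  obtain ⟨x, y⟩ := a
  rw [triRel] at h
  rw [Int.even_iff] at h
  rcases h with h | h | ⟨hp, h⟩ | ⟨hp, h⟩ <;> subst h <;>
    rw [triD_eq, triD_eq] <;> omega

set_option maxHeartbeats 1600000 in
lemma triD_descent {b : ℤ × ℤ} (h : 1 ≤ triD b) :
    ∃ a, triRel b a ∧ triD a + 1 = triD b := by
  obtain ⟨x, y⟩ := b
  rw [triD_eq] at h
  by_cases h1 : 0 < y ∧ (x + y) % 2 = 0
  · refine ⟨(x, y - 1), Or.inr (Or.inr (Or.inl ⟨Int.even_iff.mpr h1.2, rfl⟩)), ?_⟩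
    rw [triD_eq, triD_eq]; omega
  by_cases h2 : y < 0 ∧ (x + y) % 2 = 1
  · refine ⟨(x, y + 1), Or.inr (Or.inr (Or.inr ⟨fun he => ?_, rfl⟩)), ?_⟩
    · rw [Int.even_iff] at he; omega
    · rw [triD_eq, triD_eq]; omega
  by_cases h3 : 1 ≤ x
  · exact ⟨(x - 1, y), Or.inl rfl, by rw [triD_eq, triD_eq]; omega⟩
  · exact ⟨(x + 1, y), Or.inr (Or.inl rfl), by rw [triD_eq, triD_eq]; omega⟩

lemma triD_exists_walk (b : ℤ × ℤ) :
    ∃ p : triGraph.Walk (0, 0) b, p.length = triD b := by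
  generalize hn : triD b = n
  induction n generalizing b with
  | zero =>
    have : b = (0, 0) := by
      obtain ⟨x, y⟩ := b; rw [triD_eq] at hn; rw [Prod.mk.injEq]; constructor <;> omega
    subst this
    exact ⟨SimpleGraph.Walk.nil, rfl⟩
  | succ n ih =>
    obtain ⟨a, hrel, heq⟩ := triD_descent (by omega : 1 ≤ triD b)
    obtain ⟨p, hp⟩ := ih a (by omega)
    refine ⟨p.concat ((triGraph_adj_iff.mpr hrel).symm), ?_⟩
    have hlc := SimpleGraph.Walk.length_concat p ((triGraph_adj_iff.mpr hrel).symm)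
    omega

lemma triD_le_length : ∀ {u v : ℤ × ℤ} (p : triGraph.Walk u v), triD v ≤ triD u + p.length := by
  intro u v p
  induction p with
  | nil => simp
  | cons h q ih =>
    have := triD_step (triGraph_adj_iff.mp h)
    rw [SimpleGraph.Walk.length_cons]
    omega

lemma triGraph_dist_eq (b : ℤ × ℤ) : triGraph.dist (0, 0) b = triD b := by
  obtain ⟨p, hp⟩ := triD_exists_walk b
  refine le_antisymm (hp ▸ SimpleGraph.dist_le p) ?_
  obtain ⟨q, hq⟩ := (SimpleGraph.Walk.reachable p).exists_walk_length_eq_dist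
  have := triD_le_length q
  have h0 : triD (0, 0) = 0 := rfl
  omega

/-- For every `m ≥ 1`, the set of vertices of the triangular-tessellation graph at graph
distance exactly `m` from the origin is finite with cardinality `3 * m`. -/
theorem triGraph_sphere_card (m : ℕ) (hm : 1 ≤ m) :
    {b : ℤ × ℤ | triGraph.dist (0, 0) b = m}.Finite ∧
    {b : ℤ × ℤ | triGraph.dist (0, 0) b = m}.ncard = 3 * m := by
  have hset : {b : ℤ × ℤ | triGraph.dist (0, 0) b = m} = {b : ℤ × ℤ | triD b = m} := by
    ext b
    rw [Set.mem_setOf_eq, Set.mem_setOf_eq, triGraph_dist_eq]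
  set M : ℤ := (m : ℤ) with hM
  set q : ℤ := M % 2 with hq
  set K : ℤ := (M + q) / 2 with hK
  set K' : ℤ := (M - q) / 2 with hK'
  set T : Finset (ℤ × ℤ) := (Finset.Icc 0 K).image fun i => (2 * i - K, K') with hT
  set B : Finset (ℤ × ℤ) := (Finset.Icc 0 K').image fun i => (2 * i - K', -K) with hB
  set L : Finset (ℤ × ℤ) := (Finset.Ioo (-K) K').image fun y => ((y.natAbs : ℤ) - M, y) with hL
  set R : Finset (ℤ × ℤ) := (Finset.Ioo (-K) K').image fun y => (M - (y.natAbs : ℤ), y) with hR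
  have hsetF : {b : ℤ × ℤ | triD b = m} = ↑(T ∪ B ∪ L ∪ R) := by
    ext ⟨x, y⟩
    simp only [Set.mem_setOf_eq, Finset.coe_union, Set.mem_union, Finset.coe_image,
      Set.mem_image, Finset.mem_coe, Finset.mem_Icc, Finset.mem_Ioo, Prod.mk.injEq,
      triD_eq, hT, hB, hL, hR]
    constructor
    · intro h
      by_cases ht : 2 * y = M - q
      · exact Or.inl (Or.inl (Or.inl ⟨(x + K) / 2, by omega⟩))
      by_cases hb : 2 * y = -M - q
      · exact Or.inl (Or.inl (Or.inr ⟨(x + K') / 2, by omega⟩))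
      by_cases hx : x < 0
      · exact Or.inl (Or.inr ⟨y, by omega⟩)
      · exact Or.inr ⟨y, by omega⟩
    · rintro ((((⟨i, hi, hx, hy⟩ | ⟨i, hi, hx, hy⟩) | ⟨z, hz, hx, hy⟩)) | ⟨z, hz, hx, hy⟩) <;>
        omega
  have hdisjTB : Disjoint T B := by
    rw [Finset.disjoint_left]
    rintro p hp hp'
    simp only [hT, hB, Finset.mem_image, Finset.mem_Icc] at hp hp'
    obtain ⟨i, hi, rfl⟩ := hp
    obtain ⟨j, hj, he⟩ := hp'
    rw [Prod.mk.injEq] at he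
    omega
  have hdisjTBL : Disjoint (T ∪ B) L := by
    rw [Finset.disjoint_left]
    rintro p hp hp'
    simp only [hT, hB, hL, Finset.mem_union, Finset.mem_image, Finset.mem_Icc,
      Finset.mem_Ioo] at hp hp'
    obtain ⟨z, hz, rfl⟩ := hp'
    rcases hp with ⟨i, hi, he⟩ | ⟨i, hi, he⟩ <;> rw [Prod.mk.injEq] at he <;> omega
  have hdisjR : Disjoint (T ∪ B ∪ L) R := by
    rw [Finset.disjoint_left]
    rintro p hp hp'
    simp only [hT, hB, hL, hR, Finset.mem_union, Finset.mem_image, Finset.mem_Icc,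
      Finset.mem_Ioo] at hp hp'
    obtain ⟨z, hz, rfl⟩ := hp'
    rcases hp with (⟨i, hi, he⟩ | ⟨i, hi, he⟩) | ⟨w, hw, he⟩ <;> rw [Prod.mk.injEq] at he <;>
      omega
  have hcardT : T.card = (K + 1).toNat := by
    rw [hT, Finset.card_image_of_injOn, Int.card_Icc]
    · norm_num
    · intro a _ b _ hab
      rw [Prod.mk.injEq] at hab
      omega
  have hcardB : B.card = (K' + 1).toNat := by
    rw [hB, Finset.card_image_of_injOn, Int.card_Icc]
    · norm_num
    · intro a _ b _ hab
      rw [Prod.mk.injEq] at hab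
      omega
  have hcardL : L.card = (M - 1).toNat := by
    rw [hL, Finset.card_image_of_injOn, Int.card_Ioo]
    · congr 1
      omega
    · intro a _ b _ hab
      rw [Prod.mk.injEq] at hab
      exact hab.2
  have hcardR : R.card = (M - 1).toNat := by
    rw [hR, Finset.card_image_of_injOn, Int.card_Ioo]
    · congr 1
      omega
    · intro a _ b _ hab
      rw [Prod.mk.injEq] at hab
      exact hab.2
  have hcard : (T ∪ B ∪ L ∪ R).card = 3 * m := by
    rw [Finset.card_union_of_disjoint hdisjR, Finset.card_union_of_disjoint hdisjTBL,
      Finset.card_union_of_disjoint hdisjTB, hcardT, hcardB, hcardL, hcardR]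
    omega
  rw [hset, hsetF]
  exact ⟨(T ∪ B ∪ L ∪ R).finite_toSet, by rw [Set.ncard_coe_finset]; exact hcard⟩
end

section
/- Let Lx, Ly, m and N be positive integers with 2m < Lx, 2m < Ly, 2 ≤ N ≤ Lx·Ly. If N sites of the Lx × Ly lattice are occupied uniformly at random (averaging over all N-element subsets of the Lx·Ly sites), then the expected number of unordered pairs of occupied sites at periodic taxicab distance exactly m equals 2·m·N·(N−1)/(Lx·Ly − 1). -/
/-- The number of unordered pairs of occupied sites (of a configuration `M`) at periodic
taxicab distance exactly `m`. -/
def pairCount (Lx Ly m : ℕ) (M : Finset (ℕ × ℕ)) : ℕ :=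
  ((M.powersetCard 2).filter
    (fun p => ∃ a ∈ p, ∃ b ∈ p, a ≠ b ∧ periodicTaxicabDist Lx Ly a b = m)).card

section Aux
open Finset

lemma card_supersets {α : Type*} [DecidableEq α] (S p : Finset α) (N : ℕ)
    (hp : p ⊆ S) (hpN : p.card ≤ N) :
    ((S.powersetCard N).filter (fun M => p ⊆ M)).card
      = (S.card - p.card).choose (N - p.card) := by
  rw [← Finset.card_sdiff_of_subset hp, ← Finset.card_powersetCard (N - p.card) (S \ p)]
  apply Finset.card_bij' (fun M _ => M \ p) (fun M' _ => M' ∪ p)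
  · intro M hM
    simp only [mem_filter, mem_powersetCard] at hM
    rw [mem_powersetCard]
    exact ⟨sdiff_subset_sdiff hM.1.1 le_rfl, by rw [card_sdiff_of_subset hM.2, hM.1.2]⟩
  · intro M' hM'
    rw [mem_powersetCard] at hM'
    simp only [mem_filter, mem_powersetCard]
    have hd : Disjoint M' p := sdiff_disjoint.mono_left hM'.1
    refine ⟨⟨union_subset (hM'.1.trans sdiff_subset) hp, ?_⟩, subset_union_right⟩
    rw [card_union_of_disjoint hd, hM'.2]
    omega
  · intro M hM
    simp only [mem_filter] at hM
    exact sdiff_union_of_subset hM.2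
  · intro M' hM'
    rw [mem_powersetCard] at hM'
    have hd : Disjoint M' p := sdiff_disjoint.mono_left hM'.1
    exact union_sdiff_cancel_right hd

lemma coord_count (L a k : ℕ) (ha : a < L) (hk : 0 < k) (h2k : 2 * k < L) :
    ((Finset.range L).filter
      (fun b => min (Nat.dist a b) (L - Nat.dist a b) = k)).card = 2 := by
  have hset : ((Finset.range L).filter
      (fun b => min (Nat.dist a b) (L - Nat.dist a b) = k))
      = {if a + k < L then a + k else a + k - L, if k ≤ a then a - k else a + L - k} := by
    ext b
    simp only [mem_filter, mem_range, mem_insert, mem_singleton]; simp only [Nat.dist]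
    split_ifs <;> omega
  rw [hset]
  rw [card_insert_of_notMem, card_singleton]
  simp only [mem_singleton]
  split_ifs <;> omega

lemma coord_count_zero (L a : ℕ) (ha : a < L) :
    ((Finset.range L).filter
      (fun b => min (Nat.dist a b) (L - Nat.dist a b) = 0)).card = 1 := by
  have hset : ((Finset.range L).filter
      (fun b => min (Nat.dist a b) (L - Nat.dist a b) = 0)) = {a} := by
    ext b
    simp only [mem_filter, mem_range, mem_singleton]; simp only [Nat.dist]
    omega
  rw [hset, card_singleton]

lemma site_count (Lx Ly m : ℕ) (a : ℕ × ℕ) (ha : a ∈ latticeSites Lx Ly)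
    (hm : 0 < m) (hmx : 2 * m < Lx) (hmy : 2 * m < Ly) :
    ((latticeSites Lx Ly).filter
      (fun b => periodicTaxicabDist Lx Ly a b = m)).card = 4 * m := by
  simp only [latticeSites, mem_product, mem_range] at ha
  have hsplit : ((latticeSites Lx Ly).filter
      (fun b => periodicTaxicabDist Lx Ly a b = m))
      = (Finset.range (m + 1)).biUnion (fun k =>
          ((Finset.range Lx).filter
            (fun b1 => min (Nat.dist a.1 b1) (Lx - Nat.dist a.1 b1) = k)) ×ˢ
          ((Finset.range Ly).filter
            (fun b2 => min (Nat.dist a.2 b2) (Ly - Nat.dist a.2 b2) = m - k))) := by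
    ext b
    simp only [latticeSites, mem_filter, mem_product, mem_range, mem_biUnion]
    simp only [periodicTaxicabDist]
    constructor
    · rintro ⟨⟨h1, h2⟩, h3⟩
      exact ⟨_, by omega, ⟨⟨h1, rfl⟩, ⟨h2, by omega⟩⟩⟩
    · rintro ⟨k, hk, ⟨⟨h1, e1⟩, ⟨h2, e2⟩⟩⟩
      refine ⟨⟨h1, h2⟩, by omega⟩
  rw [hsplit, card_biUnion]
  · have : ∀ k ∈ Finset.range (m + 1),
        (((Finset.range Lx).filter
            (fun b1 => min (Nat.dist a.1 b1) (Lx - Nat.dist a.1 b1) = k)) ×ˢ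
          ((Finset.range Ly).filter
            (fun b2 => min (Nat.dist a.2 b2) (Ly - Nat.dist a.2 b2) = m - k))).card
        = (if k = 0 then 1 else 2) * (if k = m then 1 else 2) := by
      intro k hk
      rw [mem_range] at hk
      rw [card_product]
      congr 1
      · rcases Nat.eq_zero_or_pos k with h | h
        · subst h; simpa using coord_count_zero Lx a.1 ha.1
        · rw [if_neg (by omega)]; exact coord_count Lx a.1 k ha.1 h (by omega)
      · rcases eq_or_ne k m with h | h
        · subst h; simpa using coord_count_zero Ly a.2 ha.2
        · rw [if_neg h]; exact coord_count Ly a.2 (m - k) ha.2 (by omega) (by omega)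
    rw [Finset.sum_congr rfl this]
    obtain ⟨n, rfl⟩ : ∃ n, m = n + 1 := ⟨m - 1, by omega⟩
    rw [Finset.sum_range_succ, Finset.sum_range_succ']
    have : ∀ i ∈ Finset.range n,
        ((if i + 1 = 0 then 1 else 2) * (if i + 1 = n + 1 then 1 else 2) : ℕ) = 4 := by
      intro i hi
      rw [mem_range] at hi
      rw [if_neg (by omega), if_neg (by omega)]
    rw [Finset.sum_congr rfl this, Finset.sum_const, card_range, smul_eq_mul]
    have h1 : (0:ℕ) ≠ n + 1 := by omega
    have h2 : n + 1 ≠ 0 := by omega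
    rw [if_pos rfl, if_pos rfl, if_neg h1, if_neg h2]
    ring
  · intro x hx y hy hxy
    simp only [disjoint_left, mem_product, mem_filter]
    rintro b ⟨⟨_, e1⟩, _⟩ ⟨⟨_, e1'⟩, _⟩
    exact hxy (e1 ▸ e1')

lemma ptd_comm (Lx Ly : ℕ) (a b : ℕ × ℕ) :
    periodicTaxicabDist Lx Ly a b = periodicTaxicabDist Lx Ly b a := by
  simp [periodicTaxicabDist, Nat.dist_comm]

lemma ptd_self (Lx Ly : ℕ) (a : ℕ × ℕ) : periodicTaxicabDist Lx Ly a a = 0 := by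
  simp [periodicTaxicabDist, Nat.dist_self]

lemma ordered_count (Lx Ly m : ℕ) (hm : 0 < m) (hmx : 2 * m < Lx) (hmy : 2 * m < Ly) :
    (((latticeSites Lx Ly) ×ˢ (latticeSites Lx Ly)).filter
      (fun q => q.1 ≠ q.2 ∧ periodicTaxicabDist Lx Ly q.1 q.2 = m)).card
      = (Lx * Ly) * (4 * m) := by
  rw [Finset.card_filter, Finset.sum_product]
  have h : ∀ a ∈ latticeSites Lx Ly,
      (∑ b ∈ latticeSites Lx Ly,
        if a ≠ b ∧ periodicTaxicabDist Lx Ly a b = m then 1 else 0) = 4 * m := by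
    intro a ha
    rw [← Finset.card_filter]
    rw [show ((latticeSites Lx Ly).filter
        (fun b => a ≠ b ∧ periodicTaxicabDist Lx Ly a b = m))
        = ((latticeSites Lx Ly).filter
        (fun b => periodicTaxicabDist Lx Ly a b = m)) from ?_]
    · exact site_count Lx Ly m a ha hm hmx hmy
    · apply Finset.filter_congr
      intro b hb
      constructor
      · exact fun h => h.2
      · intro h
        refine ⟨fun hab => ?_, h⟩
        rw [hab, ptd_self] at h
        omega
  rw [Finset.sum_congr rfl h, Finset.sum_const, smul_eq_mul]
  congr 1
  simp [latticeSites]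

lemma unordered_count (Lx Ly m : ℕ) (hm : 0 < m) (hmx : 2 * m < Lx) (hmy : 2 * m < Ly) :
    (((latticeSites Lx Ly).powersetCard 2).filter
      (fun p => ∃ a ∈ p, ∃ b ∈ p, a ≠ b ∧ periodicTaxicabDist Lx Ly a b = m)).card
      = 2 * m * (Lx * Ly) := by
  set P := (((latticeSites Lx Ly).powersetCard 2).filter
      (fun p => ∃ a ∈ p, ∃ b ∈ p, a ≠ b ∧ periodicTaxicabDist Lx Ly a b = m)) with hP
  set O := (((latticeSites Lx Ly) ×ˢ (latticeSites Lx Ly)).filter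
      (fun q => q.1 ≠ q.2 ∧ periodicTaxicabDist Lx Ly q.1 q.2 = m)) with hO
  have hmap : ∀ q ∈ O, ({q.1, q.2} : Finset (ℕ × ℕ)) ∈ P := by
    intro q hq
    rw [hO, mem_filter, mem_product] at hq
    obtain ⟨⟨h1, h2⟩, hne, hd⟩ := hq
    rw [hP, mem_filter, mem_powersetCard]
    refine ⟨⟨?_, card_pair hne⟩, q.1, by simp, q.2, by simp, hne, hd⟩
    intro x hx
    rw [mem_insert, mem_singleton] at hx
    rcases hx with rfl | rfl <;> assumption
  have key := Finset.card_eq_sum_card_fiberwise hmap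
  have hfib : ∀ p ∈ P, (O.filter (fun q => ({q.1, q.2} : Finset (ℕ × ℕ)) = p)).card = 2 := by
    intro p hp
    rw [hP, mem_filter, mem_powersetCard] at hp
    obtain ⟨⟨hsub, hcard⟩, x, hx, y, hy, hxy, hdxy⟩ := hp
    obtain ⟨a, b, hab, rfl⟩ := Finset.card_eq_two.mp hcard
    have ha : a ∈ latticeSites Lx Ly := hsub (by simp)
    have hb : b ∈ latticeSites Lx Ly := hsub (by simp)
    have hd : periodicTaxicabDist Lx Ly a b = m := by
      simp only [mem_insert, mem_singleton] at hx hy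
      rcases hx with rfl | rfl <;> rcases hy with rfl | rfl
      · exact absurd rfl hxy
      · exact hdxy
      · rw [ptd_comm]; exact hdxy
      · exact absurd rfl hxy
    have : O.filter (fun q => ({q.1, q.2} : Finset (ℕ × ℕ)) = {a, b})
        = {(a, b), (b, a)} := by
      ext q
      rw [mem_filter, hO, mem_filter, mem_product, mem_insert, mem_singleton]
      constructor
      · rintro ⟨⟨-, hne, -⟩, hpair⟩
        have h1 : q.1 ∈ ({a, b} : Finset (ℕ × ℕ)) := hpair ▸ (by simp)
        have h2 : q.2 ∈ ({a, b} : Finset (ℕ × ℕ)) := hpair ▸ (by simp)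
        rw [mem_insert, mem_singleton] at h1 h2
        rcases h1 with e1 | e1 <;> rcases h2 with e2 | e2
        · exact absurd (e1.trans e2.symm) hne
        · left; exact Prod.ext e1 e2
        · right; exact Prod.ext e1 e2
        · exact absurd (e1.trans e2.symm) hne
      · rintro (rfl | rfl)
        · exact ⟨⟨⟨ha, hb⟩, hab, hd⟩, rfl⟩
        · exact ⟨⟨⟨hb, ha⟩, Ne.symm hab, by rw [ptd_comm]; exact hd⟩,
            Finset.pair_comm b a⟩
    rw [this]
    rw [card_insert_of_notMem (by
        simp only [mem_singleton, Prod.mk.injEq, not_and]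
        exact fun h _ => absurd h hab), card_singleton]
  rw [Finset.sum_congr rfl hfib, Finset.sum_const, smul_eq_mul] at key
  have := ordered_count Lx Ly m hm hmx hmy
  rw [← hO] at this
  have h2 : P.card * 2 = (2 * m * (Lx * Ly)) * 2 := by rw [← key, this]; ring
  omega

end Aux

section Main
open Finset

lemma main_sum (Lx Ly m N : ℕ) (hN : 2 ≤ N) :
    (∑ M ∈ (latticeSites Lx Ly).powersetCard N, pairCount Lx Ly m M)
      = (((latticeSites Lx Ly).powersetCard 2).filter
          (fun p => ∃ a ∈ p, ∃ b ∈ p, a ≠ b ∧ periodicTaxicabDist Lx Ly a b = m)).card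
        * (Lx * Ly - 2).choose (N - 2) := by
  set S := latticeSites Lx Ly with hS
  set P := ((S.powersetCard 2).filter
      (fun p => ∃ a ∈ p, ∃ b ∈ p, a ≠ b ∧ periodicTaxicabDist Lx Ly a b = m)) with hP
  have hcardS : S.card = Lx * Ly := by
    simp [hS, latticeSites]
  have hpc : ∀ M ∈ S.powersetCard N,
      pairCount Lx Ly m M = ∑ p ∈ P, if p ⊆ M then 1 else 0 := by
    intro M hM
    rw [Finset.mem_powersetCard] at hM
    rw [← Finset.card_filter, pairCount]
    congr 1
    ext p
    simp only [hP, Finset.mem_filter, Finset.mem_powersetCard]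
    constructor
    · rintro ⟨⟨h1, h2⟩, h3⟩
      exact ⟨⟨⟨h1.trans hM.1, h2⟩, h3⟩, h1⟩
    · rintro ⟨⟨⟨h1, h2⟩, h3⟩, h4⟩
      exact ⟨⟨h4, h2⟩, h3⟩
  rw [Finset.sum_congr rfl hpc, Finset.sum_comm]
  have hinner : ∀ p ∈ P,
      (∑ M ∈ S.powersetCard N, if p ⊆ M then 1 else 0)
        = (Lx * Ly - 2).choose (N - 2) := by
    intro p hp
    rw [hP, Finset.mem_filter, Finset.mem_powersetCard] at hp
    rw [← Finset.card_filter,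
      card_supersets S p N hp.1.1 (hp.1.2 ▸ hN), hcardS, hp.1.2]
  rw [Finset.sum_congr rfl hinner, Finset.sum_const, smul_eq_mul]

/-- If `N` sites of the `Lx × Ly` lattice are occupied uniformly at random, the expected
number of unordered pairs of occupied sites at periodic taxicab distance exactly `m`
is `2 m N (N − 1) / (Lx Ly − 1)`. -/
theorem expected_periodic_taxicab_pair_count (Lx Ly m N : ℕ)
    (hLx : 0 < Lx) (hLy : 0 < Ly) (hm : 0 < m)
    (hmx : 2 * m < Lx) (hmy : 2 * m < Ly) (hN : 2 ≤ N) (hNle : N ≤ Lx * Ly) :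
    (∑ M ∈ (latticeSites Lx Ly).powersetCard N, (pairCount Lx Ly m M : ℚ))
        / ((Lx * Ly).choose N)
      = 2 * m * N * ((N : ℚ) - 1) / ((Lx : ℚ) * (Ly : ℚ) - 1) := by
  set L := Lx * Ly with hL
  have hL2 : 2 ≤ L := le_trans hN hNle
  have hsum : (∑ M ∈ (latticeSites Lx Ly).powersetCard N, (pairCount Lx Ly m M : ℚ))
      = ((2 * m * L) * (L - 2).choose (N - 2) : ℕ) := by
    rw [← Nat.cast_sum]
    congr 1
    rw [main_sum Lx Ly m N hN, unordered_count Lx Ly m hm hmx hmy]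
  rw [hsum]
  -- choose identity
  have hnat : L * ((L - 1) * ((L - 2).choose (N - 2))) = (L.choose N) * (N * (N - 1)) := by
    have h1 : (L - 1) * ((L - 2).choose (N - 2)) = ((L - 1).choose (N - 1)) * (N - 1) := by
      have := Nat.add_one_mul_choose_eq (L - 2) (N - 2)
      rw [show L - 2 + 1 = L - 1 by omega, show N - 2 + 1 = N - 1 by omega] at this
      exact this
    have h2 : L * ((L - 1).choose (N - 1)) = (L.choose N) * N := by
      have := Nat.add_one_mul_choose_eq (L - 1) (N - 1)
      rw [show L - 1 + 1 = L by omega, show N - 1 + 1 = N by omega] at this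
      exact this
    calc L * ((L - 1) * ((L - 2).choose (N - 2)))
        = L * (((L - 1).choose (N - 1)) * (N - 1)) := by rw [h1]
      _ = (L * ((L - 1).choose (N - 1))) * (N - 1) := by ring
      _ = ((L.choose N) * N) * (N - 1) := by rw [h2]
      _ = (L.choose N) * (N * (N - 1)) := by ring
  have hC : ((L.choose N : ℚ)) ≠ 0 := by
    exact_mod_cast (Nat.choose_pos hNle).ne'
  have hLq : (Lx : ℚ) * (Ly : ℚ) = (L : ℚ) := by push_cast [hL]; ring
  have hL1 : ((L : ℚ) - 1) ≠ 0 := by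
    have : (2 : ℚ) ≤ (L : ℚ) := by exact_mod_cast hL2
    linarith
  rw [hLq, div_eq_div_iff hC hL1]
  have hq : (L : ℚ) * (((L : ℚ) - 1) * ((L - 2).choose (N - 2) : ℕ))
      = (L.choose N : ℕ) * ((N : ℚ) * ((N : ℚ) - 1)) := by
    have := congrArg (Nat.cast : ℕ → ℚ) hnat
    push_cast [Nat.cast_sub (show 1 ≤ L by omega), Nat.cast_sub (show 1 ≤ N by omega)] at this
    convert this using 2 <;> ring_nf
  push_cast
  linarith [mul_comm (2 * (m : ℚ)) ((L : ℚ) * (((L : ℚ) - 1) * ((L - 2).choose (N - 2) : ℕ))),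
    congrArg (fun x : ℚ => 2 * (m : ℚ) * x) hq]


end Main
end
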